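/- Let H=(V,E) be a hypergraph of rank at most 3 in which every vertex has degree at most 2. Say that H contains a rigid triangle if there exist pairwise distinct vertices a,b,c,d such that {a,b,c} ∈ E, {b,c,d} ∈ E, and either {a,d} ∈ E or there exists a vertex f ∉ {a,b,c,d} with {a,d,f} ∈ E; say that H contains a rigid parallel 2-path if there exist pairwise distinct vertices a,b1,b2,c1,c2,d with {a,b1,c1}, {b1,c1,d}, {a,b2,c2}, {b2,c2,d} ∈ E. Then H has a segment representation if and only if H contains neither a rigid triangle nor a rigid parallel 2-path. -/

import Mathlib

set_option maxRecDepth 8000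

abbrev Pt : Type := ℝ × ℝ

def IsLine (L : Set Pt) : Prop :=
  ∃ a b : Pt, a ≠ b ∧ L = (affineSpan ℝ {a, b} : Set Pt)

def IsSegment (S : Set Pt) : Prop :=
  ∃ a b : Pt, a ≠ b ∧ S = segment ℝ a b

structure SimpleHypergraph (ι : Type) where
  V : Finset ι
  E : Finset (Finset ι)
  edge_nonempty : ∀ e ∈ E, e.Nonempty
  edge_subset : ∀ e ∈ E, e ⊆ V

structure LineRep {ι : Type} (H : SimpleHypergraph ι) where
  α : ι → Pt
  β : Finset ι → Set Pt
  α_inj : Set.InjOn α ↑H.V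
  β_inj : Set.InjOn β ↑H.E
  β_isLine : ∀ e ∈ H.E, IsLine (β e)
  incidence : ∀ v ∈ H.V, ∀ e ∈ H.E, (v ∈ e ↔ α v ∈ β e)

structure SegmentRep {ι : Type} (H : SimpleHypergraph ι) where
  α : ι → Pt
  β : Finset ι → Set Pt
  α_inj : Set.InjOn α ↑H.V
  β_inj : Set.InjOn β ↑H.E
  β_isSegment : ∀ e ∈ H.E, IsSegment (β e)
  incidence : ∀ v ∈ H.V, ∀ e ∈ H.E, (v ∈ e ↔ α v ∈ β e)

def SegmentRep.Strict {ι : Type} {H : SimpleHypergraph ι} (R : SegmentRep H) : Prop :=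
  ∀ e ∈ H.E, ∀ e' ∈ H.E, e ≠ e' → (R.β e ∩ R.β e').Subsingleton

def LineRep.CrossingFree {ι : Type} {H : SimpleHypergraph ι} (R : LineRep H) : Prop :=
  ∀ e ∈ H.E, ∀ e' ∈ H.E, ((R.β e ∩ R.β e').Nonempty ↔ ∃ v, v ∈ e ∧ v ∈ e')

def SegmentRep.CrossingFree {ι : Type} {H : SimpleHypergraph ι} (R : SegmentRep H) : Prop :=
  ∀ e ∈ H.E, ∀ e' ∈ H.E, ((R.β e ∩ R.β e').Nonempty ↔ ∃ v, v ∈ e ∧ v ∈ e')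

namespace S10
def lm (b c : Pt) (r : ℝ) : Pt := (b.1 + r*(c.1 - b.1), b.2 + r*(c.2 - b.2))
lemma lm_zero (b c : Pt) : lm b c 0 = b := by simp [lm]
lemma lm_one (b c : Pt) : lm b c 1 = c := by simp [lm]
lemma smul_pt (r : ℝ) (p : Pt) : r • p = (r * p.1, r * p.2) := rfl
lemma mem_segment_iff_lm {p q z : Pt} :
    z ∈ segment ℝ p q ↔ ∃ θ : ℝ, 0 ≤ θ ∧ θ ≤ 1 ∧ z = lm p q θ := by
  rw [segment_eq_image]
  constructor
  · rintro ⟨θ, hθ, rfl⟩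
    exact ⟨θ, hθ.1, hθ.2, by simp [lm, smul_pt, Prod.ext_iff]; constructor <;> ring⟩
  · rintro ⟨θ, h0, h1, rfl⟩
    exact ⟨θ, ⟨h0, h1⟩, by simp [lm, smul_pt, Prod.ext_iff]; constructor <;> ring⟩
lemma lm_comp (b c : Pt) (r s θ : ℝ) :
    lm (lm b c r) (lm b c s) θ = lm b c (r + θ*(s - r)) := by
  simp [lm, Prod.ext_iff]; constructor <;> ring
lemma lm_inj {b c : Pt} (h : b ≠ c) {r s : ℝ} (hrs : lm b c r = lm b c s) : r = s := by
  rcases Prod.ext_iff.mp hrs with ⟨h1, h2⟩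
  simp only [lm] at h1 h2
  by_cases hx : c.1 = b.1
  · have hy : c.2 ≠ b.2 := by
      intro hy; exact h (Prod.ext_iff.mpr ⟨hx.symm, hy.symm⟩)
    have : r * (c.2 - b.2) = s * (c.2 - b.2) := by linarith
    exact mul_right_cancel₀ (by intro h0; apply hy; linarith) this
  · have : r * (c.1 - b.1) = s * (c.1 - b.1) := by linarith
    exact mul_right_cancel₀ (by intro h0; apply hx; linarith) this
lemma collinear_of_segment {p q x y z : Pt} (hx : x ∈ segment ℝ p q)
    (hy : y ∈ segment ℝ p q) (hz : z ∈ segment ℝ p q) (hxy : x ≠ y) :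
    ∃ r : ℝ, z = lm x y r := by
  obtain ⟨a, _, _, rfl⟩ := mem_segment_iff_lm.mp hx
  obtain ⟨b, _, _, rfl⟩ := mem_segment_iff_lm.mp hy
  obtain ⟨c, _, _, rfl⟩ := mem_segment_iff_lm.mp hz
  have hab : a ≠ b := fun h => hxy (by rw [h])
  have hba : b - a ≠ 0 := sub_ne_zero.mpr (Ne.symm hab)
  refine ⟨(c - a)/(b - a), ?_⟩
  rw [lm_comp]
  congr 1
  field_simp; ring
lemma ordconv {p q b c : Pt} {r s u : ℝ}
    (hr : lm b c r ∈ segment ℝ p q) (hs : lm b c s ∈ segment ℝ p q)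
    (hru : r ≤ u) (hus : u ≤ s) : lm b c u ∈ segment ℝ p q := by
  rcases eq_or_lt_of_le (hru.trans hus) with h | h
  · obtain rfl : r = u := le_antisymm hru (h ▸ hus)
    exact hr
  · have hθ0 : (0:ℝ) ≤ (u - r)/(s - r) := div_nonneg (by linarith) (by linarith)
    have hθ1 : (u - r)/(s - r) ≤ 1 := by
      rw [div_le_one (by linarith)]; linarith
    have hsr : s - r ≠ 0 := by intro h0; rw [sub_eq_zero] at h0; linarith
    have key : lm b c u = lm (lm b c r) (lm b c s) ((u - r)/(s - r)) := by
      rw [lm_comp]; congr 1; field_simp; ring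
    rw [key]
    obtain ⟨a1, h10, h11, e1⟩ := mem_segment_iff_lm.mp hr
    obtain ⟨a2, h20, h21, e2⟩ := mem_segment_iff_lm.mp hs
    rw [e1, e2, lm_comp]
    refine mem_segment_iff_lm.mpr ⟨_, ?_, ?_, rfl⟩
    · nlinarith [hθ0, hθ1]
    · nlinarith [hθ0, hθ1]
lemma lm_swap (x y : Pt) (u s : ℝ) : lm y (lm x y u) s = lm x y (1 + s*(u-1)) := by
  simp [lm, Prod.ext_iff]; constructor <;> ring
lemma lm_scale (x y : Pt) (w z : ℝ) : lm x (lm x y w) z = lm x y (z*w) := by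
  simp [lm, Prod.ext_iff]; constructor <;> ring
lemma notmem_side {J : ℝ → Prop}
    (oc : ∀ r u s, J r → J s → r ≤ u → u ≤ s → J u)
    {x y z w : ℝ} (hx : J x) (hy : J y) (hz : J z) (hw : ¬ J w) :
    (w < x ∧ w < y ∧ w < z) ∨ (x < w ∧ y < w ∧ z < w) := by
  rcases lt_trichotomy w x with h | h | h
  · left
    refine ⟨h, ?_, ?_⟩
    · by_contra hy'; push_neg at hy'; exact hw (oc y w x hy hx hy' h.le)
    · by_contra hz'; push_neg at hz'; exact hw (oc z w x hz hx hz' h.le)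
  · exact absurd (h ▸ hx) hw
  · right
    refine ⟨h, ?_, ?_⟩
    · by_contra hy'; push_neg at hy'; exact hw (oc x w y hx hy h.le hy')
    · by_contra hz'; push_neg at hz'; exact hw (oc x w z hx hz h.le hz')
lemma straddle {I₁ I₂ : ℝ → Prop}
    (oc₁ : ∀ r u s, I₁ r → I₁ s → r ≤ u → u ≤ s → I₁ u)
    (oc₂ : ∀ r u s, I₂ r → I₂ s → r ≤ u → u ≤ s → I₂ u)
    {u v ta td : ℝ} (hu1 : I₁ u) (hv1 : I₁ v) (ha1 : I₁ ta)
    (hu2 : I₂ u) (hv2 : I₂ v) (hd2 : I₂ td)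
    (hd1 : ¬ I₁ td) (ha2 : ¬ I₂ ta) :
    (ta < u ∧ ta < v ∧ u < td ∧ v < td) ∨ (td < u ∧ td < v ∧ u < ta ∧ v < ta) := by
  rcases notmem_side oc₁ hu1 hv1 ha1 hd1 with ⟨h1,h2,h3⟩ | ⟨h1,h2,h3⟩ <;>
    rcases notmem_side oc₂ hu2 hv2 hd2 ha2 with ⟨g1,g2,g3⟩ | ⟨g1,g2,g3⟩
  · exact absurd h3 (by linarith)
  · right; exact ⟨h1, h2, g1, g2⟩
  · left; exact ⟨g1, g2, h1, h2⟩
  · exact absurd h3 (by linarith)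

section Forward
variable {ι : Type} [DecidableEq ι] {H : SimpleHypergraph ι}

lemma deg3_false (hdeg : ∀ v ∈ H.V, (H.E.filter (fun e => v ∈ e)).card ≤ 2)
    {v : ι} {e₁ e₂ e₃ : Finset ι} (hv : v ∈ H.V)
    (h1 : e₁ ∈ H.E) (h2 : e₂ ∈ H.E) (h3 : e₃ ∈ H.E)
    (m1 : v ∈ e₁) (m2 : v ∈ e₂) (m3 : v ∈ e₃)
    (n12 : e₁ ≠ e₂) (n13 : e₁ ≠ e₃) (n23 : e₂ ≠ e₃) : False := by
  have hsub : ({e₁, e₂, e₃} : Finset (Finset ι)) ⊆ H.E.filter (fun e => v ∈ e) := by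
    intro x hx
    simp only [Finset.mem_insert, Finset.mem_singleton] at hx
    rcases hx with rfl | rfl | rfl <;> simp [Finset.mem_filter, *]
  have hcard : ({e₁, e₂, e₃} : Finset (Finset ι)).card = 3 := by
    rw [Finset.card_insert_of_notMem (by simp [n12, n13]),
        Finset.card_insert_of_notMem (by simp [n23])]
    simp
  have := Finset.card_le_card hsub
  rw [hcard] at this
  have := hdeg v hv
  omega

lemma forward_tri (hdeg : ∀ v ∈ H.V, (H.E.filter (fun e => v ∈ e)).card ≤ 2)
    (R : SegmentRep H) :
    ¬ ∃ a b c d : ι, [a, b, c, d].Pairwise (· ≠ ·) ∧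
        ({a, b, c} : Finset ι) ∈ H.E ∧ ({b, c, d} : Finset ι) ∈ H.E ∧
        (({a, d} : Finset ι) ∈ H.E ∨
          ∃ f : ι, f ∉ ({a, b, c, d} : Finset ι) ∧ ({a, d, f} : Finset ι) ∈ H.E) := by
  rintro ⟨a, b, c, d, hpw, h1, h2, h3⟩
  simp only [List.pairwise_cons, List.mem_cons, List.not_mem_nil,
    List.mem_singleton] at hpw
  obtain ⟨hA, hB, hC, -⟩ := hpw
  have hab : a ≠ b := hA b (by tauto)
  have hac : a ≠ c := hA c (by tauto)
  have had : a ≠ d := hA d (by tauto)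
  have hbc : b ≠ c := hB c (by tauto)
  have hbd : b ≠ d := hB d (by tauto)
  have hcd : c ≠ d := hC d (by tauto)
  have hma1 : a ∈ ({a,b,c} : Finset ι) := by simp
  have hmb1 : b ∈ ({a,b,c} : Finset ι) := by simp
  have hmc1 : c ∈ ({a,b,c} : Finset ι) := by simp
  have hmb2 : b ∈ ({b,c,d} : Finset ι) := by simp
  have hmc2 : c ∈ ({b,c,d} : Finset ι) := by simp
  have hmd2 : d ∈ ({b,c,d} : Finset ι) := by simp
  have haV : a ∈ H.V := H.edge_subset _ h1 hma1
  have hbV : b ∈ H.V := H.edge_subset _ h1 hmb1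
  have hcV : c ∈ H.V := H.edge_subset _ h1 hmc1
  have hdV : d ∈ H.V := H.edge_subset _ h2 hmd2
  obtain ⟨p₁, q₁, hne₁, hseg₁⟩ := R.β_isSegment _ h1
  obtain ⟨p₂, q₂, hne₂, hseg₂⟩ := R.β_isSegment _ h2
  set b0 := R.α b with hb0
  set c0 := R.α c with hc0
  have hbc0 : b0 ≠ c0 := fun h => hbc (R.α_inj hbV hcV h)
  have Aa1 : R.α a ∈ segment ℝ p₁ q₁ := by
    rw [← hseg₁]; exact (R.incidence a haV _ h1).mp hma1
  have Ab1 : b0 ∈ segment ℝ p₁ q₁ := by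
    rw [← hseg₁]; exact (R.incidence b hbV _ h1).mp hmb1
  have Ac1 : c0 ∈ segment ℝ p₁ q₁ := by
    rw [← hseg₁]; exact (R.incidence c hcV _ h1).mp hmc1
  have Ab2 : b0 ∈ segment ℝ p₂ q₂ := by
    rw [← hseg₂]; exact (R.incidence b hbV _ h2).mp hmb2
  have Ac2 : c0 ∈ segment ℝ p₂ q₂ := by
    rw [← hseg₂]; exact (R.incidence c hcV _ h2).mp hmc2
  have Ad2 : R.α d ∈ segment ℝ p₂ q₂ := by
    rw [← hseg₂]; exact (R.incidence d hdV _ h2).mp hmd2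
  obtain ⟨ta, hta⟩ := collinear_of_segment Ab1 Ac1 Aa1 hbc0
  obtain ⟨td, htd⟩ := collinear_of_segment Ab2 Ac2 Ad2 hbc0
  have hnI1d : lm b0 c0 td ∉ segment ℝ p₁ q₁ := by
    rw [← htd, ← hseg₁]
    intro h
    have : d ∈ ({a,b,c} : Finset ι) := (R.incidence d hdV _ h1).mpr h
    simp [had.symm, hbd.symm, hcd.symm] at this
  have hnI2a : lm b0 c0 ta ∉ segment ℝ p₂ q₂ := by
    rw [← hta, ← hseg₂]
    intro h
    have : a ∈ ({b,c,d} : Finset ι) := (R.incidence a haV _ h2).mpr h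
    simp [hab, hac, had] at this
  have hI10 : lm b0 c0 0 ∈ segment ℝ p₁ q₁ := by rw [lm_zero]; exact Ab1
  have hI11 : lm b0 c0 1 ∈ segment ℝ p₁ q₁ := by rw [lm_one]; exact Ac1
  have hI1a : lm b0 c0 ta ∈ segment ℝ p₁ q₁ := by rw [← hta]; exact Aa1
  have hI20 : lm b0 c0 0 ∈ segment ℝ p₂ q₂ := by rw [lm_zero]; exact Ab2
  have hI21 : lm b0 c0 1 ∈ segment ℝ p₂ q₂ := by rw [lm_one]; exact Ac2
  have hI2d : lm b0 c0 td ∈ segment ℝ p₂ q₂ := by rw [← htd]; exact Ad2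
  have S1 := straddle (I₁ := fun r => lm b0 c0 r ∈ segment ℝ p₁ q₁)
    (I₂ := fun r => lm b0 c0 r ∈ segment ℝ p₂ q₂)
    (fun r u s hr hs h1 h2 => ordconv hr hs h1 h2)
    (fun r u s hr hs h1 h2 => ordconv hr hs h1 h2)
    hI10 hI11 hI1a hI20 hI21 hI2d hnI1d hnI2a
  -- now handle e₃
  have main : ∀ e₃ : Finset ι, e₃ ∈ H.E → a ∈ e₃ → d ∈ e₃ → b ∉ e₃ → False := by
    intro e₃ h3' ha3 hd3 hb3
    obtain ⟨p₃, q₃, hne₃, hseg₃⟩ := R.β_isSegment _ h3'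
    have Aa3 : lm b0 c0 ta ∈ segment ℝ p₃ q₃ := by
      rw [← hta, ← hseg₃]; exact (R.incidence a haV _ h3').mp ha3
    have Ad3 : lm b0 c0 td ∈ segment ℝ p₃ q₃ := by
      rw [← htd, ← hseg₃]; exact (R.incidence d hdV _ h3').mp hd3
    have hb3' : lm b0 c0 0 ∈ segment ℝ p₃ q₃ := by
      rcases S1 with ⟨u1, u2, u3, u4⟩ | ⟨u1, u2, u3, u4⟩
      · exact ordconv Aa3 Ad3 u1.le u3.le
      · exact ordconv Ad3 Aa3 u1.le u3.le
    rw [lm_zero] at hb3'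
    exact hb3 ((R.incidence b hbV _ h3').mpr (by rw [hseg₃]; exact hb3'))
  rcases h3 with h3 | ⟨f, hf, h3⟩
  · exact main _ h3 (by simp) (by simp) (by simp [hab.symm, hbd])
  · simp only [Finset.mem_insert, Finset.mem_singleton] at hf
    push_neg at hf
    have hbf : b ≠ f := fun h => hf.2.1 h.symm
    exact main _ h3 (by simp) (by simp) (by simp [hab.symm, hbd, hbf])

lemma forward_path (R : SegmentRep H) :
    ¬ ∃ a b₁ b₂ c₁ c₂ d : ι, [a, b₁, b₂, c₁, c₂, d].Pairwise (· ≠ ·) ∧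
        ({a, b₁, c₁} : Finset ι) ∈ H.E ∧ ({b₁, c₁, d} : Finset ι) ∈ H.E ∧
        ({a, b₂, c₂} : Finset ι) ∈ H.E ∧ ({b₂, c₂, d} : Finset ι) ∈ H.E := by
  rintro ⟨a, b1, b2, c1, c2, d, hpw, h1, h2, h3, h4⟩
  simp only [List.pairwise_cons, List.mem_cons, List.not_mem_nil,
    List.mem_singleton] at hpw
  obtain ⟨hA, hB1, hB2, hC1, hC2, -⟩ := hpw
  have hab1 : a ≠ b1 := hA b1 (by tauto)
  have hab2 : a ≠ b2 := hA b2 (by tauto)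
  have hac1 : a ≠ c1 := hA c1 (by tauto)
  have hac2 : a ≠ c2 := hA c2 (by tauto)
  have had : a ≠ d := hA d (by tauto)
  have hb1b2 : b1 ≠ b2 := hB1 b2 (by tauto)
  have hb1c1 : b1 ≠ c1 := hB1 c1 (by tauto)
  have hb1c2 : b1 ≠ c2 := hB1 c2 (by tauto)
  have hb1d : b1 ≠ d := hB1 d (by tauto)
  have hb2c1 : b2 ≠ c1 := hB2 c1 (by tauto)
  have hb2c2 : b2 ≠ c2 := hB2 c2 (by tauto)
  have hb2d : b2 ≠ d := hB2 d (by tauto)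
  have hc1c2 : c1 ≠ c2 := hC1 c2 (by tauto)
  have hc1d : c1 ≠ d := hC1 d (by tauto)
  have hc2d : c2 ≠ d := hC2 d (by tauto)
  have haV : a ∈ H.V := H.edge_subset _ h1 (by simp)
  have hb1V : b1 ∈ H.V := H.edge_subset _ h1 (by simp)
  have hc1V : c1 ∈ H.V := H.edge_subset _ h1 (by simp)
  have hb2V : b2 ∈ H.V := H.edge_subset _ h3 (by simp)
  have hc2V : c2 ∈ H.V := H.edge_subset _ h3 (by simp)
  have hdV : d ∈ H.V := H.edge_subset _ h2 (by simp)
  obtain ⟨p₁, q₁, hne₁, hseg₁⟩ := R.β_isSegment _ h1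
  obtain ⟨p₂, q₂, hne₂, hseg₂⟩ := R.β_isSegment _ h2
  obtain ⟨p₃, q₃, hne₃, hseg₃⟩ := R.β_isSegment _ h3
  obtain ⟨p₄, q₄, hne₄, hseg₄⟩ := R.β_isSegment _ h4
  set b0 := R.α b1 with hb0
  set c0 := R.α c1 with hc0
  have hbc0 : b0 ≠ c0 := fun h => hb1c1 (R.α_inj hb1V hc1V h)
  have Aa1 : R.α a ∈ segment ℝ p₁ q₁ := by
    rw [← hseg₁]; exact (R.incidence a haV _ h1).mp (by simp)
  have Ab1 : b0 ∈ segment ℝ p₁ q₁ := by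
    rw [← hseg₁]; exact (R.incidence b1 hb1V _ h1).mp (by simp)
  have Ac1 : c0 ∈ segment ℝ p₁ q₁ := by
    rw [← hseg₁]; exact (R.incidence c1 hc1V _ h1).mp (by simp)
  have Ab2' : b0 ∈ segment ℝ p₂ q₂ := by
    rw [← hseg₂]; exact (R.incidence b1 hb1V _ h2).mp (by simp)
  have Ac2' : c0 ∈ segment ℝ p₂ q₂ := by
    rw [← hseg₂]; exact (R.incidence c1 hc1V _ h2).mp (by simp)
  have Ad2 : R.α d ∈ segment ℝ p₂ q₂ := by
    rw [← hseg₂]; exact (R.incidence d hdV _ h2).mp (by simp)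
  have Aa3 : R.α a ∈ segment ℝ p₃ q₃ := by
    rw [← hseg₃]; exact (R.incidence a haV _ h3).mp (by simp)
  have Ab3 : R.α b2 ∈ segment ℝ p₃ q₃ := by
    rw [← hseg₃]; exact (R.incidence b2 hb2V _ h3).mp (by simp)
  have Ac3 : R.α c2 ∈ segment ℝ p₃ q₃ := by
    rw [← hseg₃]; exact (R.incidence c2 hc2V _ h3).mp (by simp)
  have Ab4 : R.α b2 ∈ segment ℝ p₄ q₄ := by
    rw [← hseg₄]; exact (R.incidence b2 hb2V _ h4).mp (by simp)
  have Ac4 : R.α c2 ∈ segment ℝ p₄ q₄ := by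
    rw [← hseg₄]; exact (R.incidence c2 hc2V _ h4).mp (by simp)
  have Ad4 : R.α d ∈ segment ℝ p₄ q₄ := by
    rw [← hseg₄]; exact (R.incidence d hdV _ h4).mp (by simp)
  obtain ⟨ta, hta⟩ := collinear_of_segment Ab1 Ac1 Aa1 hbc0
  obtain ⟨td, htd⟩ := collinear_of_segment Ab2' Ac2' Ad2 hbc0
  -- coordinates for b2 and c2
  have hab2' : R.α a ≠ R.α b2 := fun h => hab2 (R.α_inj haV hb2V h)
  have hb2c2' : R.α b2 ≠ R.α c2 := fun h => hb2c2 (R.α_inj hb2V hc2V h)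
  have had' : R.α a ≠ R.α d := fun h => had (R.α_inj haV hdV h)
  obtain ⟨u, hu⟩ := collinear_of_segment Aa3 Ab3 Ac3 hab2'
  obtain ⟨s, hs⟩ := collinear_of_segment Ab4 Ac4 Ad4 hb2c2'
  have hdw : R.α d = lm (R.α a) (R.α b2) (1 + s*(u-1)) := by
    rw [hs, hu, lm_swap]
  set w := 1 + s*(u-1) with hwdef
  have hw : w ≠ 0 := by
    intro h0
    rw [h0, lm_zero] at hdw
    exact had' hdw.symm
  have hb2eq : R.α b2 = lm (R.α a) (R.α d) w⁻¹ := by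
    rw [hdw, lm_scale, inv_mul_cancel₀ hw, lm_one]
  set x₂ := ta + w⁻¹ * (td - ta) with hx2def
  have hb2x : R.α b2 = lm b0 c0 x₂ := by
    rw [hb2eq, hta, htd, lm_comp]
  set y₂ := ta + u * (x₂ - ta) with hy2def
  have hc2y : R.α c2 = lm b0 c0 y₂ := by
    rw [hu, hb2x, hta, lm_comp]
  -- straddle 1
  have hnI1d : lm b0 c0 td ∉ segment ℝ p₁ q₁ := by
    rw [← htd, ← hseg₁]
    intro h
    have : d ∈ ({a,b1,c1} : Finset ι) := (R.incidence d hdV _ h1).mpr h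
    simp [had.symm, hb1d.symm, hc1d.symm] at this
  have hnI2a : lm b0 c0 ta ∉ segment ℝ p₂ q₂ := by
    rw [← hta, ← hseg₂]
    intro h
    have : a ∈ ({b1,c1,d} : Finset ι) := (R.incidence a haV _ h2).mpr h
    simp [hab1, hac1, had] at this
  have hI10 : lm b0 c0 0 ∈ segment ℝ p₁ q₁ := by rw [lm_zero]; exact Ab1
  have hI11 : lm b0 c0 1 ∈ segment ℝ p₁ q₁ := by rw [lm_one]; exact Ac1
  have hI1a : lm b0 c0 ta ∈ segment ℝ p₁ q₁ := by rw [← hta]; exact Aa1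
  have hI20 : lm b0 c0 0 ∈ segment ℝ p₂ q₂ := by rw [lm_zero]; exact Ab2'
  have hI21 : lm b0 c0 1 ∈ segment ℝ p₂ q₂ := by rw [lm_one]; exact Ac2'
  have hI2d : lm b0 c0 td ∈ segment ℝ p₂ q₂ := by rw [← htd]; exact Ad2
  have S1 := straddle (I₁ := fun r => lm b0 c0 r ∈ segment ℝ p₁ q₁)
    (I₂ := fun r => lm b0 c0 r ∈ segment ℝ p₂ q₂)
    (fun r u s hr hs h1 h2 => ordconv hr hs h1 h2)
    (fun r u s hr hs h1 h2 => ordconv hr hs h1 h2)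
    hI10 hI11 hI1a hI20 hI21 hI2d hnI1d hnI2a
  -- straddle 2
  have hnI3d : lm b0 c0 td ∉ segment ℝ p₃ q₃ := by
    rw [← htd, ← hseg₃]
    intro h
    have : d ∈ ({a,b2,c2} : Finset ι) := (R.incidence d hdV _ h3).mpr h
    simp [had.symm, hb2d.symm, hc2d.symm] at this
  have hnI4a : lm b0 c0 ta ∉ segment ℝ p₄ q₄ := by
    rw [← hta, ← hseg₄]
    intro h
    have : a ∈ ({b2,c2,d} : Finset ι) := (R.incidence a haV _ h4).mpr h
    simp [hab2, hac2, had] at this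
  have hI3x : lm b0 c0 x₂ ∈ segment ℝ p₃ q₃ := by rw [← hb2x]; exact Ab3
  have hI3y : lm b0 c0 y₂ ∈ segment ℝ p₃ q₃ := by rw [← hc2y]; exact Ac3
  have hI3a : lm b0 c0 ta ∈ segment ℝ p₃ q₃ := by rw [← hta]; exact Aa3
  have hI4x : lm b0 c0 x₂ ∈ segment ℝ p₄ q₄ := by rw [← hb2x]; exact Ab4
  have hI4y : lm b0 c0 y₂ ∈ segment ℝ p₄ q₄ := by rw [← hc2y]; exact Ac4
  have hI4d : lm b0 c0 td ∈ segment ℝ p₄ q₄ := by rw [← htd]; exact Ad4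
  have S2 := straddle (I₁ := fun r => lm b0 c0 r ∈ segment ℝ p₃ q₃)
    (I₂ := fun r => lm b0 c0 r ∈ segment ℝ p₄ q₄)
    (fun r u s hr hs h1 h2 => ordconv hr hs h1 h2)
    (fun r u s hr hs h1 h2 => ordconv hr hs h1 h2)
    hI3x hI3y hI3a hI4x hI4y hI4d hnI3d hnI4a
  -- x₂ avoids I₁ and I₂
  have hnI1x : lm b0 c0 x₂ ∉ segment ℝ p₁ q₁ := by
    rw [← hb2x, ← hseg₁]
    intro h
    have : b2 ∈ ({a,b1,c1} : Finset ι) := (R.incidence b2 hb2V _ h1).mpr h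
    simp [hab2.symm, hb1b2.symm, hb2c1] at this
  have hnI2x : lm b0 c0 x₂ ∉ segment ℝ p₂ q₂ := by
    rw [← hb2x, ← hseg₂]
    intro h
    have : b2 ∈ ({b1,c1,d} : Finset ι) := (R.incidence b2 hb2V _ h2).mpr h
    simp [hb1b2.symm, hb2c1, hb2d] at this
  have N1 := notmem_side (J := fun r => lm b0 c0 r ∈ segment ℝ p₁ q₁)
    (fun r u s hr hs h1 h2 => ordconv hr hs h1 h2) hI10 hI11 hI1a hnI1x
  have N2 := notmem_side (J := fun r => lm b0 c0 r ∈ segment ℝ p₂ q₂)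
    (fun r u s hr hs h1 h2 => ordconv hr hs h1 h2) hI20 hI21 hI2d hnI2x
  rcases S1 with ⟨u1,u2,u3,u4⟩|⟨u1,u2,u3,u4⟩ <;>
    rcases S2 with ⟨v1,v2,v3,v4⟩|⟨v1,v2,v3,v4⟩ <;>
    rcases N1 with ⟨w1,w2,w3⟩|⟨w1,w2,w3⟩ <;>
    rcases N2 with ⟨z1,z2,z3⟩|⟨z1,z2,z3⟩ <;> linarith

end Forward
end S10
namespace S10
variable {ι : Type} [DecidableEq ι] (H : SimpleHypergraph ι)

/-- the class of an edge: itself together with any edge sharing ≥ 2 vertices. -/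
def cls (e : Finset ι) : Finset (Finset ι) :=
  H.E.filter (fun f => e = f ∨ 2 ≤ (e ∩ f).card)

def Dv (v : ι) : Finset (Finset ι) := H.E.filter (fun e => v ∈ e)

noncomputable def tp (e : Finset ι) : ℝ :=
  (((H.E.image (cls H)).toList.idxOf (cls H e) : ℕ) : ℝ)

noncomputable def Tv (v : ι) : Finset ℝ := (Dv H v).image (tp H)

noncomputable def mB : ℝ := (H.E.card : ℝ)

noncomputable def nu (v : ι) : ℝ := ((H.V.toList.idxOf v : ℕ) : ℝ)

noncomputable def TS : Finset ℝ := H.E.image (tp H)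

variable {H}

lemma mem_cls_self {e : Finset ι} (he : e ∈ H.E) : e ∈ cls H e := by
  simp [cls, Finset.mem_filter, he]

lemma cls_subset (e : Finset ι) : cls H e ⊆ H.E := Finset.filter_subset _ _

lemma mem_cls_symm {e f : Finset ι} (he : e ∈ H.E) (hf : f ∈ cls H e) :
    e ∈ cls H f := by
  simp only [cls, Finset.mem_filter] at hf ⊢
  refine ⟨he, ?_⟩
  rcases hf.2 with h | h
  · exact Or.inl h.symm
  · right; rwa [Finset.inter_comm]

lemma inter_card_le (hrank : ∀ e ∈ H.E, e.card ≤ 3) {e f : Finset ι}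
    (he : e ∈ H.E) (hf : f ∈ H.E) (hef : e ≠ f) : (e ∩ f).card ≤ 2 := by
  by_contra h
  push_neg at h
  have h3 : 3 ≤ (e ∩ f).card := h
  have hsube : e ∩ f ⊆ e := Finset.inter_subset_left
  have hsubf : e ∩ f ⊆ f := Finset.inter_subset_right
  have he3 : e = e ∩ f := (Finset.eq_of_subset_of_card_le hsube
    (le_trans (hrank e he) h3)).symm
  have hf3 : f = e ∩ f := (Finset.eq_of_subset_of_card_le hsubf
    (le_trans (hrank f hf) h3)).symm
  exact hef (he3.trans hf3.symm)

lemma pair_card (hrank : ∀ e ∈ H.E, e.card ≤ 3) {e f : Finset ι}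
    (he : e ∈ H.E) (hef : e ≠ f) (hf : f ∈ cls H e) : (e ∩ f).card = 2 := by
  simp only [cls, Finset.mem_filter] at hf
  rcases hf.2 with h | h
  · exact absurd h hef
  · exact le_antisymm (inter_card_le hrank he hf.1 hef) h

lemma pair_shape (hrank : ∀ e ∈ H.E, e.card ≤ 3) {e f : Finset ι}
    (he : e ∈ H.E) (hef : e ≠ f) (hf : f ∈ cls H e) :
    e = e ∩ f ∨ ∃ a, a ∉ f ∧ a ∈ e ∧ e = insert a (e ∩ f) := by
  have hS : (e ∩ f).card = 2 := pair_card hrank he hef hf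
  have hsub : e ∩ f ⊆ e := Finset.inter_subset_left
  rcases Nat.lt_or_ge (e.card) 3 with h | h
  · left
    exact (Finset.eq_of_subset_of_card_le hsub (by omega)).symm
  · right
    have he3 : e.card = 3 := le_antisymm (hrank e he) h
    have : (e \ (e ∩ f)).card = 1 := by
      rw [Finset.card_sdiff_of_subset hsub, hS, he3]
    obtain ⟨a, ha⟩ := Finset.card_eq_one.mp this
    have hae : a ∈ e \ (e ∩ f) := ha ▸ Finset.mem_singleton_self a
    have hae' : a ∈ e := (Finset.mem_sdiff.mp hae).1
    have hanS : a ∉ e ∩ f := (Finset.mem_sdiff.mp hae).2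
    refine ⟨a, fun hafo => hanS (Finset.mem_inter.mpr ⟨hae', hafo⟩), hae', ?_⟩
    apply Finset.Subset.antisymm
    · intro x hx
      by_cases hxS : x ∈ e ∩ f
      · exact Finset.mem_insert_of_mem hxS
      · have : x ∈ e \ (e ∩ f) := Finset.mem_sdiff.mpr ⟨hx, hxS⟩
        rw [ha] at this
        simp only [Finset.mem_singleton] at this
        subst this
        exact Finset.mem_insert_self _ _
    · intro x hx
      rcases Finset.mem_insert.mp hx with rfl | hx
      · exact hae'
      · exact hsub hx

lemma partner_unique (hrank : ∀ e ∈ H.E, e.card ≤ 3)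
    (hdeg : ∀ v ∈ H.V, (H.E.filter (fun e => v ∈ e)).card ≤ 2)
    {e f g : Finset ι} (he : e ∈ H.E) (hf : f ∈ cls H e) (hg : g ∈ cls H e)
    (hfe : f ≠ e) (hge : g ≠ e) : f = g := by
  by_contra hfg
  have hfE : f ∈ H.E := cls_subset e hf
  have hgE : g ∈ H.E := cls_subset e hg
  have hSf : (e ∩ f).card = 2 := pair_card hrank he (Ne.symm hfe) hf
  have hSg : (e ∩ g).card = 2 := pair_card hrank he (Ne.symm hge) hg
  have hcup : ((e ∩ f) ∪ (e ∩ g)).card ≤ 3 := by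
    refine le_trans (Finset.card_le_card ?_) (hrank e he)
    intro x hx
    rcases Finset.mem_union.mp hx with h | h
    · exact (Finset.mem_inter.mp h).1
    · exact (Finset.mem_inter.mp h).1
  have hkey := Finset.card_union_add_card_inter (e ∩ f) (e ∩ g)
  have hint : 0 < ((e ∩ f) ∩ (e ∩ g)).card := by omega
  obtain ⟨v, hv⟩ := Finset.card_pos.mp hint
  have hvf : v ∈ f := (Finset.mem_inter.mp ((Finset.mem_inter.mp hv).1)).2
  have hvg : v ∈ g := (Finset.mem_inter.mp ((Finset.mem_inter.mp hv).2)).2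
  have hve : v ∈ e := (Finset.mem_inter.mp ((Finset.mem_inter.mp hv).1)).1
  exact deg3_false hdeg (H.edge_subset e he hve) he hfE hgE hve hvf hvg
    (Ne.symm hfe) (Ne.symm hge) hfg

lemma cls_eq_of_mem (hrank : ∀ e ∈ H.E, e.card ≤ 3)
    (hdeg : ∀ v ∈ H.V, (H.E.filter (fun e => v ∈ e)).card ≤ 2)
    {e f : Finset ι} (he : e ∈ H.E) (hf : f ∈ cls H e) : cls H f = cls H e := by
  by_cases hef : f = e
  · rw [hef]
  · have hfE : f ∈ H.E := cls_subset e hf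
    have hecf : e ∈ cls H f := mem_cls_symm he hf
    have h1 : cls H e = {e, f} := by
      apply Finset.Subset.antisymm
      · intro g hg
        by_cases hge : g = e
        · simp [hge]
        · have := partner_unique hrank hdeg he hg hf hge hef
          simp [this]
      · intro g hg
        rcases Finset.mem_insert.mp hg with rfl | hg
        · exact mem_cls_self he
        · simp only [Finset.mem_singleton] at hg
          exact hg ▸ hf
    have h2 : cls H f = {f, e} := by
      apply Finset.Subset.antisymm
      · intro g hg
        by_cases hgf : g = f
        · simp [hgf]
        · have := partner_unique hrank hdeg hfE hg hecf hgf
            (fun h => hef h.symm)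
          simp [this]
      · intro g hg
        rcases Finset.mem_insert.mp hg with rfl | hg
        · exact mem_cls_self hfE
        · simp only [Finset.mem_singleton] at hg
          exact hg ▸ hecf
    rw [h1, h2, Finset.pair_comm]

lemma tp_eq_iff {e f : Finset ι} (he : e ∈ H.E) (hf : f ∈ H.E) :
    tp H e = tp H f ↔ cls H e = cls H f := by
  constructor
  · intro h
    unfold tp at h
    have h' : (H.E.image (cls H)).toList.idxOf (cls H e) =
        (H.E.image (cls H)).toList.idxOf (cls H f) := by
      exact_mod_cast h
    have hme : cls H e ∈ (H.E.image (cls H)).toList := by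
      rw [Finset.mem_toList]; exact Finset.mem_image_of_mem _ he
    have hmf : cls H f ∈ (H.E.image (cls H)).toList := by
      rw [Finset.mem_toList]; exact Finset.mem_image_of_mem _ hf
    exact (List.idxOf_inj hme).mp h'
  · intro h
    unfold tp
    rw [h]

lemma tp_lt_mB {e : Finset ι} (he : e ∈ H.E) : tp H e < mB H := by
  have hme : cls H e ∈ (H.E.image (cls H)).toList := by
    rw [Finset.mem_toList]; exact Finset.mem_image_of_mem _ he
  have h1 : (H.E.image (cls H)).toList.idxOf (cls H e) <
      (H.E.image (cls H)).toList.length := List.idxOf_lt_length_iff.mpr hme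
  have h2 : (H.E.image (cls H)).toList.length = (H.E.image (cls H)).card :=
    Finset.length_toList _
  have h3 : (H.E.image (cls H)).card ≤ H.E.card := Finset.card_image_le
  unfold tp mB
  exact_mod_cast lt_of_lt_of_le (h2 ▸ h1) h3

lemma tp_nonneg (e : Finset ι) : 0 ≤ tp H e := Nat.cast_nonneg _

lemma nu_nonneg (v : ι) : 0 ≤ nu H v := Nat.cast_nonneg _

lemma nu_inj {v w : ι} (hv : v ∈ H.V) (hw : w ∈ H.V) (h : nu H v = nu H w) :
    v = w := by
  unfold nu at h
  have h' : H.V.toList.idxOf v = H.V.toList.idxOf w := by exact_mod_cast h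
  exact (List.idxOf_inj (Finset.mem_toList.mpr hv)).mp h'

lemma Dv_pair (hdeg : ∀ v ∈ H.V, (H.E.filter (fun e => v ∈ e)).card ≤ 2)
    {v : ι} {e f : Finset ι} (he : e ∈ H.E) (hf : f ∈ H.E) (hef : e ≠ f)
    (hve : v ∈ e) (hvf : v ∈ f) : Dv H v = {e, f} := by
  have hvV : v ∈ H.V := H.edge_subset e he hve
  have hsub : ({e, f} : Finset (Finset ι)) ⊆ Dv H v := by
    intro x hx
    rcases Finset.mem_insert.mp hx with rfl | hx
    · simp [Dv, Finset.mem_filter, he, hve]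
    · simp only [Finset.mem_singleton] at hx
      subst hx
      simp [Dv, Finset.mem_filter, hf, hvf]
  refine (Finset.eq_of_subset_of_card_le hsub ?_).symm
  have : ({e, f} : Finset (Finset ι)).card = 2 := Finset.card_pair hef
  rw [this]
  exact hdeg v hvV

lemma mem_Dv {v : ι} {e : Finset ι} : e ∈ Dv H v ↔ e ∈ H.E ∧ v ∈ e := by
  simp [Dv, Finset.mem_filter]

end S10
namespace S10
variable {ι : Type} [DecidableEq ι] {H : SimpleHypergraph ι}

lemma pw4 {a b c d : ι} (h1 : a≠b) (h2 : a≠c) (h3 : a≠d) (h4 : b≠c) (h5 : b≠d)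
    (h6 : c≠d) : [a,b,c,d].Pairwise (· ≠ ·) := by
  simp only [List.pairwise_cons, List.mem_cons, List.mem_singleton, List.not_mem_nil,
    List.Pairwise.nil]
  refine ⟨fun x hx => ?_, fun x hx => ?_, fun x hx => ?_, ?_⟩ <;>
    first
      | (rcases hx with rfl | rfl | rfl | h0 <;> first | assumption | exact absurd h0 (by simp) | simp_all)
      | simp
lemma pw6 {a b c d e f : ι} (h1 : a≠b) (h2 : a≠c) (h3 : a≠d) (h4 : a≠e) (h5 : a≠f)
    (h6 : b≠c) (h7 : b≠d) (h8 : b≠e) (h9 : b≠f) (h10 : c≠d) (h11 : c≠e) (h12 : c≠f)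
    (h13 : d≠e) (h14 : d≠f) (h15 : e≠f) : [a,b,c,d,e,f].Pairwise (· ≠ ·) := by
  simp only [List.pairwise_cons, List.mem_cons, List.mem_singleton, List.not_mem_nil]
  refine ⟨fun x hx => ?_, fun x hx => ?_, fun x hx => ?_, fun x hx => ?_, fun x hx => ?_, ?_⟩ <;>
    first
      | (rcases hx with rfl | rfl | rfl | rfl | rfl | h0 <;> first | assumption | exact absurd h0 (by simp) | simp_all)
      | simp
end S10
namespace S10
variable {ι : Type} [DecidableEq ι] {H : SimpleHypergraph ι}

lemma set3_comm {b c w : ι} : ({b, c, w} : Finset ι) = insert w {b, c} := by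
  ext x; simp; tauto

/-- If `x ∈ e` belongs to a pair class `{e,f}` but has an edge of another class,
then `x` is the outer vertex of `e`. -/
lemma outer_struct (hrank : ∀ e ∈ H.E, e.card ≤ 3)
    (hdeg : ∀ v ∈ H.V, (H.E.filter (fun e => v ∈ e)).card ≤ 2)
    {e f g : Finset ι} {x : ι}
    (he : e ∈ H.E) (hf : f ∈ cls H e) (hef : e ≠ f) (hxe : x ∈ e)
    (hg : g ∈ H.E) (hxg : x ∈ g) (hgtp : tp H g ≠ tp H e) :
    x ∉ e ∩ f ∧ e = insert x (e ∩ f) := by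
  have hfE : f ∈ H.E := cls_subset e hf
  have hxnS : x ∉ e ∩ f := by
    intro hxS
    have hDx : Dv H x = {e, f} :=
      Dv_pair hdeg he hfE hef hxe (Finset.mem_inter.mp hxS).2
    have hgD : g ∈ Dv H x := mem_Dv.mpr ⟨hg, hxg⟩
    rw [hDx] at hgD
    rcases Finset.mem_insert.mp hgD with rfl | hgD
    · exact hgtp rfl
    · simp only [Finset.mem_singleton] at hgD
      subst hgD
      exact hgtp ((tp_eq_iff hg he).mpr (cls_eq_of_mem hrank hdeg he hf))
  refine ⟨hxnS, ?_⟩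
  rcases pair_shape hrank he hef hf with h | ⟨a, hanf, hae, hsh⟩
  · rw [← h] at hxnS; exact absurd hxe hxnS
  · have : x = a := by
      rw [hsh] at hxe
      rcases Finset.mem_insert.mp hxe with h' | h'
      · exact h'
      · exact absurd h' hxnS
    rw [this]; exact hsh

/-- common edge `ec` contains `v,w`; pair class `(ep, fp)` has outer vertices
`v` in `ep` and `w` in `fp`. This yields a rigid triangle. -/
lemma tri_case (hrank : ∀ e ∈ H.E, e.card ≤ 3)
    (hdeg : ∀ v ∈ H.V, (H.E.filter (fun e => v ∈ e)).card ≤ 2)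
    {v w : ι} {ep fp ec : Finset ι} (hvw : v ≠ w)
    (hep : ep ∈ H.E) (hfp : fp ∈ cls H ep) (hepfp : ep ≠ fp)
    (hvS : v ∉ ep ∩ fp) (hepsh : ep = insert v (ep ∩ fp))
    (hwS : w ∉ ep ∩ fp) (hfpsh : fp = insert w (ep ∩ fp))
    (hec : ec ∈ H.E) (hvec : v ∈ ec) (hwec : w ∈ ec)
    (hecep : ec ≠ ep) (hecfp : ec ≠ fp) :
    ∃ a b c d : ι, [a, b, c, d].Pairwise (· ≠ ·) ∧
        ({a, b, c} : Finset ι) ∈ H.E ∧ ({b, c, d} : Finset ι) ∈ H.E ∧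
        (({a, d} : Finset ι) ∈ H.E ∨
          ∃ f : ι, f ∉ ({a, b, c, d} : Finset ι) ∧ ({a, d, f} : Finset ι) ∈ H.E) := by
  have hfpE : fp ∈ H.E := cls_subset ep hfp
  obtain ⟨b, c, hbc, hS⟩ := Finset.card_eq_two.mp (pair_card hrank hep hepfp hfp)
  have hvb : v ≠ b := fun h => hvS (hS ▸ (h ▸ Finset.mem_insert_self b {c}))
  have hvc : v ≠ c := fun h => hvS (by rw [hS, h]; simp)
  have hwb : w ≠ b := fun h => hwS (by rw [hS, h]; simp)
  have hwc : w ≠ c := fun h => hwS (by rw [hS, h]; simp)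
  have hbnec : b ∉ ec := by
    intro hb
    have hbep : b ∈ ep := by rw [hepsh, hS]; simp
    have hbfp : b ∈ fp := by rw [hfpsh, hS]; simp
    exact deg3_false hdeg (H.edge_subset ep hep hbep) hep hfpE hec hbep hbfp hb
      hepfp (fun h => hecep h.symm) (fun h => hecfp h.symm)
  have hcnec : c ∉ ec := by
    intro hc
    have hcep : c ∈ ep := by rw [hepsh, hS]; simp
    have hcfp : c ∈ fp := by rw [hfpsh, hS]; simp
    exact deg3_false hdeg (H.edge_subset ep hep hcep) hep hfpE hec hcep hcfp hc
      hepfp (fun h => hecep h.symm) (fun h => hecfp h.symm)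
  refine ⟨v, b, c, w, pw4 hvb hvc hvw hbc (fun h => hwb h.symm) (fun h => hwc h.symm), ?_, ?_, ?_⟩
  · have : ({v, b, c} : Finset ι) = ep := by rw [hepsh, hS]
    rw [this]; exact hep
  · have : ({b, c, w} : Finset ι) = fp := by rw [hfpsh, hS, set3_comm]
    rw [this]; exact hfpE
  · -- the common edge ec ⊇ {v, w}
    have hvwsub : ({v, w} : Finset ι) ⊆ ec := by
      intro x hx
      rcases Finset.mem_insert.mp hx with rfl | hx
      · exact hvec
      · simp only [Finset.mem_singleton] at hx; subst hx; exact hwec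
    rcases Nat.lt_or_ge ec.card 3 with h | h
    · left
      have : ec = {v, w} := (Finset.eq_of_subset_of_card_le hvwsub
        (by rw [Finset.card_pair hvw]; omega)).symm
      rw [← this]; exact hec
    · right
      have hec3 : ec.card = 3 := le_antisymm (hrank ec hec) h
      have : (ec \ {v, w}).card = 1 := by
        rw [Finset.card_sdiff_of_subset hvwsub, Finset.card_pair hvw, hec3]
      obtain ⟨g, hg⟩ := Finset.card_eq_one.mp this
      have hgmem : g ∈ ec \ {v, w} := hg ▸ Finset.mem_singleton_self g
      have hgec : g ∈ ec := (Finset.mem_sdiff.mp hgmem).1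
      have hgvw : g ∉ ({v, w} : Finset ι) := (Finset.mem_sdiff.mp hgmem).2
      simp only [Finset.mem_insert, Finset.mem_singleton] at hgvw
      push_neg at hgvw
      refine ⟨g, ?_, ?_⟩
      · simp only [Finset.mem_insert, Finset.mem_singleton]
        push_neg
        exact ⟨hgvw.1, fun h => hbnec (h ▸ hgec), fun h => hcnec (h ▸ hgec), hgvw.2⟩
      · have : ({v, w, g} : Finset ι) = ec := by
          apply Finset.Subset.antisymm
          · intro x hx
            simp only [Finset.mem_insert, Finset.mem_singleton] at hx
            rcases hx with rfl | rfl | rfl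
            · exact hvec
            · exact hwec
            · exact hgec
          · intro x hx
            by_cases hxvw : x ∈ ({v, w} : Finset ι)
            · simp only [Finset.mem_insert, Finset.mem_singleton] at hxvw ⊢
              tauto
            · have : x ∈ ec \ {v, w} := Finset.mem_sdiff.mpr ⟨hx, hxvw⟩
              rw [hg] at this
              simp only [Finset.mem_singleton] at this
              subst this
              simp
        rw [this]; exact hec
end S10
namespace S10
variable {ι : Type} [DecidableEq ι] {H : SimpleHypergraph ι}

lemma key_forced (hrank : ∀ e ∈ H.E, e.card ≤ 3)
    (hdeg : ∀ v ∈ H.V, (H.E.filter (fun e => v ∈ e)).card ≤ 2)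
    (hNT : ¬ ∃ a b c d : ι, [a, b, c, d].Pairwise (· ≠ ·) ∧
          ({a, b, c} : Finset ι) ∈ H.E ∧ ({b, c, d} : Finset ι) ∈ H.E ∧
          (({a, d} : Finset ι) ∈ H.E ∨
            ∃ f : ι, f ∉ ({a, b, c, d} : Finset ι) ∧ ({a, d, f} : Finset ι) ∈ H.E))
    (hNP : ¬ ∃ a b₁ b₂ c₁ c₂ d : ι, [a, b₁, b₂, c₁, c₂, d].Pairwise (· ≠ ·) ∧
          ({a, b₁, c₁} : Finset ι) ∈ H.E ∧ ({b₁, c₁, d} : Finset ι) ∈ H.E ∧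
          ({a, b₂, c₂} : Finset ι) ∈ H.E ∧ ({b₂, c₂, d} : Finset ι) ∈ H.E)
    {v w : ι} (hvw : v ≠ w)
    (hT : Tv H v = Tv H w) (hc : (Tv H v).card = 2) : False := by
  obtain ⟨s, u, hsu, hTv⟩ := Finset.card_eq_two.mp hc
  have hsv : s ∈ Tv H v := by rw [hTv]; simp
  have huv : u ∈ Tv H v := by rw [hTv]; simp
  obtain ⟨e₁, he₁D, he₁tp⟩ := Finset.mem_image.mp hsv
  obtain ⟨e₂, he₂D, he₂tp⟩ := Finset.mem_image.mp huv
  obtain ⟨f₁, hf₁D, hf₁tp⟩ := Finset.mem_image.mp (hT ▸ hsv)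
  obtain ⟨f₂, hf₂D, hf₂tp⟩ := Finset.mem_image.mp (hT ▸ huv)
  have he₁E : e₁ ∈ H.E := (mem_Dv.mp he₁D).1
  have he₂E : e₂ ∈ H.E := (mem_Dv.mp he₂D).1
  have hf₁E : f₁ ∈ H.E := (mem_Dv.mp hf₁D).1
  have hf₂E : f₂ ∈ H.E := (mem_Dv.mp hf₂D).1
  have hve₁ : v ∈ e₁ := (mem_Dv.mp he₁D).2
  have hve₂ : v ∈ e₂ := (mem_Dv.mp he₂D).2
  have hwf₁ : w ∈ f₁ := (mem_Dv.mp hf₁D).2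
  have hwf₂ : w ∈ f₂ := (mem_Dv.mp hf₂D).2
  have t12 : tp H e₁ ≠ tp H e₂ := by rw [he₁tp, he₂tp]; exact hsu
  have t21 : tp H e₂ ≠ tp H e₁ := Ne.symm t12
  have tf12 : tp H f₁ ≠ tp H f₂ := by rw [hf₁tp, hf₂tp]; exact hsu
  have tf21 : tp H f₂ ≠ tp H f₁ := Ne.symm tf12
  have te1f2 : tp H e₁ ≠ tp H f₂ := by rw [he₁tp, hf₂tp]; exact hsu
  have te2f1 : tp H e₂ ≠ tp H f₁ := by rw [he₂tp, hf₁tp]; exact Ne.symm hsu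
  have htp₁ : tp H e₁ = tp H f₁ := by rw [he₁tp, hf₁tp]
  have htp₂ : tp H e₂ = tp H f₂ := by rw [he₂tp, hf₂tp]
  have neOf : ∀ {x y : Finset ι}, tp H x ≠ tp H y → x ≠ y :=
    fun h hxy => h (hxy ▸ rfl)
  have hcls₁ : f₁ ∈ cls H e₁ := by
    rw [(tp_eq_iff he₁E hf₁E).mp htp₁]
    exact mem_cls_self hf₁E
  have hcls₂ : f₂ ∈ cls H e₂ := by
    rw [(tp_eq_iff he₂E hf₂E).mp htp₂]
    exact mem_cls_self hf₂E
  by_cases h1 : e₁ = f₁ <;> by_cases h2 : e₂ = f₂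
  · -- v, w in two common edges
    have hwe₁ : w ∈ e₁ := by rw [h1]; exact hwf₁
    have hwe₂ : w ∈ e₂ := by rw [h2]; exact hwf₂
    have hsub : ({v, w} : Finset ι) ⊆ e₁ ∩ e₂ := by
      intro x hx
      rcases Finset.mem_insert.mp hx with rfl | hx
      · exact Finset.mem_inter.mpr ⟨hve₁, hve₂⟩
      · simp only [Finset.mem_singleton] at hx; subst hx
        exact Finset.mem_inter.mpr ⟨hwe₁, hwe₂⟩
    have h2le : 2 ≤ (e₁ ∩ e₂).card := by
      have := Finset.card_le_card hsub
      rwa [Finset.card_pair hvw] at this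
    have hmem : e₂ ∈ cls H e₁ := by
      simp only [cls, Finset.mem_filter]
      exact ⟨he₂E, Or.inr h2le⟩
    exact t21 ((tp_eq_iff he₂E he₁E).mpr (cls_eq_of_mem hrank hdeg he₁E hmem))
  · -- common edge e₁ = f₁, pair (e₂, f₂)
    obtain ⟨hvS, hvsh⟩ := outer_struct hrank hdeg he₂E hcls₂ h2 hve₂ he₁E hve₁ t12
    have hcls₂' : e₂ ∈ cls H f₂ := mem_cls_symm he₂E hcls₂
    obtain ⟨hwS, hwsh⟩ := outer_struct hrank hdeg hf₂E hcls₂' (Ne.symm h2) hwf₂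
      hf₁E hwf₁ tf12
    rw [Finset.inter_comm f₂ e₂] at hwS hwsh
    have hwe₁ : w ∈ e₁ := by rw [h1]; exact hwf₁
    exact hNT (tri_case hrank hdeg hvw he₂E hcls₂ h2 hvS hvsh hwS hwsh he₁E hve₁
      hwe₁ (neOf t12) (neOf te1f2))
  · -- common edge e₂ = f₂, pair (e₁, f₁)
    obtain ⟨hvS, hvsh⟩ := outer_struct hrank hdeg he₁E hcls₁ h1 hve₁ he₂E hve₂ t21
    have hcls₁' : e₁ ∈ cls H f₁ := mem_cls_symm he₁E hcls₁
    obtain ⟨hwS, hwsh⟩ := outer_struct hrank hdeg hf₁E hcls₁' (Ne.symm h1) hwf₁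
      hf₂E hwf₂ tf21
    rw [Finset.inter_comm f₁ e₁] at hwS hwsh
    have hwe₂ : w ∈ e₂ := by rw [h2]; exact hwf₂
    exact hNT (tri_case hrank hdeg hvw he₁E hcls₁ h1 hvS hvsh hwS hwsh he₂E hve₂
      hwe₂ (neOf t21) (neOf te2f1))
  · -- two pairs: parallel 2-path
    obtain ⟨hvS₁, hvsh₁⟩ := outer_struct hrank hdeg he₁E hcls₁ h1 hve₁ he₂E hve₂ t21
    have hcls₁' : e₁ ∈ cls H f₁ := mem_cls_symm he₁E hcls₁
    obtain ⟨hwS₁, hwsh₁⟩ := outer_struct hrank hdeg hf₁E hcls₁' (Ne.symm h1) hwf₁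
      hf₂E hwf₂ tf21
    rw [Finset.inter_comm f₁ e₁] at hwS₁ hwsh₁
    obtain ⟨hvS₂, hvsh₂⟩ := outer_struct hrank hdeg he₂E hcls₂ h2 hve₂ he₁E hve₁ t12
    have hcls₂' : e₂ ∈ cls H f₂ := mem_cls_symm he₂E hcls₂
    obtain ⟨hwS₂, hwsh₂⟩ := outer_struct hrank hdeg hf₂E hcls₂' (Ne.symm h2) hwf₂
      hf₁E hwf₁ tf12
    rw [Finset.inter_comm f₂ e₂] at hwS₂ hwsh₂
    obtain ⟨b₁, c₁, hbc₁, hS₁⟩ := Finset.card_eq_two.mp (pair_card hrank he₁E h1 hcls₁)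
    obtain ⟨b₂, c₂, hbc₂, hS₂⟩ := Finset.card_eq_two.mp (pair_card hrank he₂E h2 hcls₂)
    have hdisj : ∀ x, x ∈ e₁ ∩ f₁ → x ∈ e₂ ∩ f₂ → False := by
      intro x hx1 hx2
      have hxe₁ : x ∈ e₁ := (Finset.mem_inter.mp hx1).1
      have hxf₁ : x ∈ f₁ := (Finset.mem_inter.mp hx1).2
      have hxe₂ : x ∈ e₂ := (Finset.mem_inter.mp hx2).1
      exact deg3_false hdeg (H.edge_subset e₁ he₁E hxe₁) he₁E hf₁E he₂E hxe₁ hxf₁ hxe₂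
        h1 (neOf t12) (neOf (htp₁ ▸ t12 : tp H f₁ ≠ tp H e₂))
    have hvb₁ : v ≠ b₁ := fun h => hvS₁ (by rw [hS₁, ← h]; simp)
    have hvc₁ : v ≠ c₁ := fun h => hvS₁ (by rw [hS₁, ← h]; simp)
    have hwb₁ : w ≠ b₁ := fun h => hwS₁ (by rw [hS₁, ← h]; simp)
    have hwc₁ : w ≠ c₁ := fun h => hwS₁ (by rw [hS₁, ← h]; simp)
    have hvb₂ : v ≠ b₂ := fun h => hvS₂ (by rw [hS₂, ← h]; simp)
    have hvc₂ : v ≠ c₂ := fun h => hvS₂ (by rw [hS₂, ← h]; simp)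
    have hwb₂ : w ≠ b₂ := fun h => hwS₂ (by rw [hS₂, ← h]; simp)
    have hwc₂ : w ≠ c₂ := fun h => hwS₂ (by rw [hS₂, ← h]; simp)
    have hb₁b₂ : b₁ ≠ b₂ := fun h =>
      hdisj b₁ (by rw [hS₁]; simp) (by rw [hS₂, ← h]; simp)
    have hb₁c₂ : b₁ ≠ c₂ := fun h =>
      hdisj b₁ (by rw [hS₁]; simp) (by rw [hS₂, ← h]; simp)
    have hc₁b₂ : c₁ ≠ b₂ := fun h =>
      hdisj c₁ (by rw [hS₁]; simp) (by rw [hS₂, ← h]; simp)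
    have hc₁c₂ : c₁ ≠ c₂ := fun h =>
      hdisj c₁ (by rw [hS₁]; simp) (by rw [hS₂, ← h]; simp)
    apply hNP
    refine ⟨v, b₁, b₂, c₁, c₂, w,
      pw6 hvb₁ hvb₂ hvc₁ hvc₂ hvw hb₁b₂ hbc₁ hb₁c₂ (fun h => hwb₁ h.symm)
        (fun h => hc₁b₂ h.symm) hbc₂ (fun h => hwb₂ h.symm) hc₁c₂
        (fun h => hwc₁ h.symm) (fun h => hwc₂ h.symm), ?_, ?_, ?_, ?_⟩
    · have : ({v, b₁, c₁} : Finset ι) = e₁ := by rw [hvsh₁, hS₁]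
      rw [this]; exact he₁E
    · have : ({b₁, c₁, w} : Finset ι) = f₁ := by rw [hwsh₁, hS₁, set3_comm]
      rw [this]; exact hf₁E
    · have : ({v, b₂, c₂} : Finset ι) = e₂ := by rw [hvsh₂, hS₂]
      rw [this]; exact he₂E
    · have : ({b₂, c₂, w} : Finset ι) = f₂ := by rw [hwsh₂, hS₂, set3_comm]
      rw [this]; exact hf₂E
end S10
namespace S10
/-- point on tangent line `y = 2tx - t²` with abscissa `x` -/
noncomputable def pt2 (t x : ℝ) : Pt := (x, 2*t*x - t^2)
/-- intersection of the tangents at parameters `s` and `u` -/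
noncomputable def ptt (s u : ℝ) : Pt := ((s+u)/2, s*u)

lemma ptt_comm (s u : ℝ) : ptt s u = ptt u s := by
  simp [ptt, Prod.ext_iff]; constructor <;> ring

lemma ptt_on (s u : ℝ) : (ptt s u).2 = 2*s*(ptt s u).1 - s^2 := by
  simp [ptt]; ring

lemma ptt_online {s u r : ℝ} (h : (ptt s u).2 = 2*r*(ptt s u).1 - r^2) :
    r = s ∨ r = u := by
  simp only [ptt] at h
  have : (r - s)*(r - u) = 0 := by linear_combination h
  rcases mul_eq_zero.mp this with h | h
  · left; linarith
  · right; linarith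

lemma ptt_inj {s u s' u' : ℝ} (h : ptt s u = ptt s' u') :
    (s = s' ∧ u = u') ∨ (s = u' ∧ u = s') := by
  rcases Prod.ext_iff.mp h with ⟨h1, h2⟩
  simp only [ptt] at h1 h2
  have h1' : s + u = s' + u' := by linarith
  have key : (s - s')*(s - u') = 0 := by linear_combination s*h1' - h2
  rcases mul_eq_zero.mp key with h3 | h3
  · left
    constructor
    · linarith
    · have : s = s' := by linarith
      subst this; linarith
  · right
    constructor
    · linarith
    · have : s = u' := by linarith
      subst this; linarith

lemma tangent_below (t x : ℝ) : 2*t*x - t^2 ≤ x^2 := by nlinarith [sq_nonneg (x - t)]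

lemma lm_pt2 (t lo hi θ : ℝ) : lm (pt2 t lo) (pt2 t hi) θ = pt2 t (lo + θ*(hi - lo)) := by
  unfold lm pt2
  exact Prod.ext_iff.mpr ⟨rfl, by ring⟩

lemma pt2_inj {t x y : ℝ} (h : pt2 t x = pt2 t y) : x = y := congrArg Prod.fst h

lemma mem_seg_iff {t lo hi : ℝ} (h : lo < hi) {p : Pt} :
    p ∈ segment ℝ (pt2 t lo) (pt2 t hi) ↔
      (p.2 = 2*t*p.1 - t^2 ∧ lo ≤ p.1 ∧ p.1 ≤ hi) := by
  rw [mem_segment_iff_lm]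
  constructor
  · rintro ⟨θ, h0, h1, rfl⟩
    rw [lm_pt2]
    refine ⟨rfl, ?_, ?_⟩ <;> simp only [pt2] <;> nlinarith
  · rintro ⟨hline, hlo, hhi⟩
    refine ⟨(p.1 - lo)/(hi - lo), div_nonneg (by linarith) (by linarith),
      by rw [div_le_one (by linarith)]; linarith, ?_⟩
    rw [lm_pt2]
    have hne : hi - lo ≠ 0 := by intro h0; rw [sub_eq_zero] at h0; exact absurd h0.symm (ne_of_lt h)
    have : lo + (p.1 - lo)/(hi - lo)*(hi - lo) = p.1 := by
      field_simp; ring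
    rw [this]
    exact Prod.ext_iff.mpr ⟨rfl, hline⟩

lemma line_param_inj {t t' x y : ℝ} (hxy : x ≠ y)
    (h1 : 2*t*x - t^2 = 2*t'*x - t'^2) (h2 : 2*t*y - t^2 = 2*t'*y - t'^2) : t = t' := by
  have key : (t - t')*(x - y) = 0 := by linear_combination (h1 - h2)/2
  rcases mul_eq_zero.mp key with h | h
  · linarith
  · exact absurd (by linarith : x = y) hxy

lemma exists_two_avoid (B : Finset ℝ) {lo hi : ℝ} (h : lo < hi) :
    ∃ x y : ℝ, lo < x ∧ x < y ∧ y < hi ∧ x ∉ B ∧ y ∉ B := by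
  obtain ⟨x, hx⟩ := ((Set.Ioo_infinite h).diff B.finite_toSet).nonempty
  obtain ⟨hx1, hx2⟩ := hx
  have hxhi : x < hi := hx1.2
  obtain ⟨y, hy⟩ := ((Set.Ioo_infinite hxhi).diff B.finite_toSet).nonempty
  obtain ⟨hy1, hy2⟩ := hy
  exact ⟨x, y, hx1.1, hy1.1, hy1.2, hx2, hy2⟩

section Defs
variable {ι : Type} [DecidableEq ι] (H : SimpleHypergraph ι)

/-- shared vertices of a (pair) class -/
def SPc' (P : Finset (Finset ι)) : Finset ι :=
  (P.sup id).filter (fun v => ∀ g ∈ P, v ∈ g)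

/-- class parameter of a pair class -/
noncomputable def tPc (P : Finset (Finset ι)) : ℝ := (P.image (tp H)).sum id

/-- the σ-parameter of a (potential) outer vertex -/
noncomputable def parB (t : ℝ) (a : ι) : ℝ :=
  if (Tv H a).card = 2 then (Tv H a).sum id - t else mB H + 1/2 + nu H a

/-- σ-parameters of the outer vertices of a pair class -/
noncomputable def OB (P : Finset (Finset ι)) : Finset ℝ :=
  ((P.sup id) \ SPc' P).image (parB H (tPc H P))

open Classical in
noncomputable def loP (P : Finset (Finset ι)) : ℝ :=
  if h : (OB H P).Nonempty then (OB H P).min' h else 0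

open Classical in
noncomputable def hiP (P : Finset (Finset ι)) : ℝ :=
  if h : (OB H P).Nonempty then
    (if (OB H P).max' h = (OB H P).min' h then (OB H P).min' h + 1 else (OB H P).max' h)
  else 1

lemma loP_lt_hiP (P : Finset (Finset ι)) : loP H P < hiP H P := by
  unfold loP hiP
  by_cases h : (OB H P).Nonempty
  · rw [dif_pos h, dif_pos h]
    by_cases heq : (OB H P).max' h = (OB H P).min' h
    · rw [if_pos heq]; linarith
    · rw [if_neg heq]
      exact lt_of_le_of_ne (Finset.min'_le _ _ (Finset.max'_mem _ h)) (Ne.symm heq)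
  · rw [dif_neg h, dif_neg h]; norm_num

noncomputable def XY (P : Finset (Finset ι)) : ℝ × ℝ :=
  ((exists_two_avoid (TS H) (loP_lt_hiP H P)).choose,
   (exists_two_avoid (TS H) (loP_lt_hiP H P)).choose_spec.choose)

lemma XY_spec (P : Finset (Finset ι)) :
    loP H P < (XY H P).1 ∧ (XY H P).1 < (XY H P).2 ∧ (XY H P).2 < hiP H P ∧
    (XY H P).1 ∉ TS H ∧ (XY H P).2 ∉ TS H :=
  (exists_two_avoid (TS H) (loP_lt_hiP H P)).choose_spec.choose_spec

open Classical in
noncomputable def sig (v : ι) : ℝ :=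
  if (Dv H v).card = 2 ∧ (Tv H v).card = 1 then
    (if ∀ w ∈ SPc' (Dv H v), w ≠ v → nu H v < nu H w then (XY H (Dv H v)).1
     else (XY H (Dv H v)).2)
  else mB H + 1/2 + nu H v

noncomputable def alf (v : ι) : Pt :=
  if (Tv H v).card = 2 then (((Tv H v).sum id)/2, (Tv H v).prod id)
  else if (Tv H v).card = 1 then ptt ((Tv H v).sum id) (sig H v)
  else (nu H v, (nu H v)^2 + 1)

noncomputable def prm (t : ℝ) (v : ι) : ℝ :=
  if (Tv H v).card = 2 then (Tv H v).sum id - t else sig H v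

noncomputable def xse (e : Finset ι) : Finset ℝ := e.image (fun v => (alf H v).1)

open Classical in
noncomputable def loe (e : Finset ι) : ℝ :=
  if h : (xse H e).Nonempty then (xse H e).min' h else 0

open Classical in
noncomputable def hie (e : Finset ι) : ℝ :=
  if h : (xse H e).Nonempty then
    (if (xse H e).max' h = (xse H e).min' h then (xse H e).min' h + 1
     else (xse H e).max' h)
  else 1

noncomputable def bet (e : Finset ι) : Set Pt :=
  segment ℝ (pt2 (tp H e) (loe H e)) (pt2 (tp H e) (hie H e))

lemma loe_lt_hie (e : Finset ι) : loe H e < hie H e := by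
  unfold loe hie
  by_cases h : (xse H e).Nonempty
  · rw [dif_pos h, dif_pos h]
    by_cases heq : (xse H e).max' h = (xse H e).min' h
    · rw [if_pos heq]; linarith
    · rw [if_neg heq]
      exact lt_of_le_of_ne (Finset.min'_le _ _ (Finset.max'_mem _ h)) (Ne.symm heq)
  · rw [dif_neg h, dif_neg h]; norm_num

lemma bet_isSegment (e : Finset ι) : IsSegment (bet H e) := by
  refine ⟨_, _, ?_, rfl⟩
  intro h
  have := pt2_inj h
  exact absurd this (ne_of_lt (loe_lt_hie H e))

lemma mem_bet_iff {e : Finset ι} {p : Pt} :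
    p ∈ bet H e ↔ (p.2 = 2*(tp H e)*p.1 - (tp H e)^2 ∧ loe H e ≤ p.1 ∧ p.1 ≤ hie H e) :=
  mem_seg_iff (loe_lt_hie H e)

end Defs
end S10
namespace S10
variable {ι : Type} [DecidableEq ι] {H : SimpleHypergraph ι}

lemma TS_mem {e : Finset ι} (he : e ∈ H.E) : tp H e ∈ TS H :=
  Finset.mem_image_of_mem _ he

lemma TS_lt_mB {x : ℝ} (hx : x ∈ TS H) : x < mB H := by
  obtain ⟨e, he, rfl⟩ := Finset.mem_image.mp hx
  exact tp_lt_mB he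

lemma fresh_not_TS (v : ι) : mB H + 1/2 + nu H v ∉ TS H := by
  intro h
  have h1 := TS_lt_mB h
  have h2 := nu_nonneg (H := H) v
  linarith

lemma sig_not_TS (v : ι) : sig H v ∉ TS H := by
  unfold sig
  split
  · split
    · exact (XY_spec H (Dv H v)).2.2.2.1
    · exact (XY_spec H (Dv H v)).2.2.2.2
  · exact fresh_not_TS v

lemma Dv_card_le (hdeg : ∀ v ∈ H.V, (H.E.filter (fun e => v ∈ e)).card ≤ 2)
    {v : ι} (hv : v ∈ H.V) : (Dv H v).card ≤ 2 := hdeg v hv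

lemma Tv_card_le (hdeg : ∀ v ∈ H.V, (H.E.filter (fun e => v ∈ e)).card ≤ 2)
    {v : ι} (hv : v ∈ H.V) : (Tv H v).card ≤ 2 :=
  le_trans Finset.card_image_le (hdeg v hv)

lemma mem_Tv {v : ι} {e : Finset ι} (he : e ∈ H.E) (hve : v ∈ e) :
    tp H e ∈ Tv H v :=
  Finset.mem_image_of_mem _ (mem_Dv.mpr ⟨he, hve⟩)

lemma Tv_subset_TS {v : ι} : Tv H v ⊆ TS H := by
  intro x hx
  obtain ⟨e, he, rfl⟩ := Finset.mem_image.mp hx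
  exact TS_mem (mem_Dv.mp he).1

lemma Tv_repr {v : ι} {t : ℝ} (h2 : (Tv H v).card = 2) (ht : t ∈ Tv H v) :
    Tv H v = {t, (Tv H v).sum id - t} ∧ (Tv H v).sum id - t ≠ t ∧
      (Tv H v).sum id - t ∈ Tv H v := by
  obtain ⟨a, b, hab, hTv⟩ := Finset.card_eq_two.mp h2
  have hsum : (Tv H v).sum id = a + b := by rw [hTv]; exact Finset.sum_pair hab
  rw [hTv] at ht
  rcases Finset.mem_insert.mp ht with rfl | ht
  · have e1 : (Tv H v).sum id - t = b := by rw [hsum]; ring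
    rw [e1, hTv]
    exact ⟨rfl, Ne.symm hab, by simp⟩
  · simp only [Finset.mem_singleton] at ht
    subst ht
    have e1 : (Tv H v).sum id - t = a := by rw [hsum]; ring
    rw [e1, hTv]
    exact ⟨Finset.pair_comm a t, hab, by simp⟩

lemma alf_eq_ptt (hdeg : ∀ v ∈ H.V, (H.E.filter (fun e => v ∈ e)).card ≤ 2)
    {v : ι} (hv : v ∈ H.V) {t : ℝ} (ht : t ∈ Tv H v) :
    alf H v = ptt t (prm H t v) := by
  unfold alf prm
  by_cases h2 : (Tv H v).card = 2
  · rw [if_pos h2, if_pos h2]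
    obtain ⟨a, b, hab, hTv⟩ := Finset.card_eq_two.mp h2
    have hsum : (Tv H v).sum id = a + b := by rw [hTv]; exact Finset.sum_pair hab
    have hprod : (Tv H v).prod id = a * b := by rw [hTv]; exact Finset.prod_pair hab
    rw [hTv] at ht
    rcases Finset.mem_insert.mp ht with rfl | ht
    · have e1 : (Tv H v).sum id - t = b := by rw [hsum]; ring
      rw [e1, hsum, hprod]
      rfl
    · simp only [Finset.mem_singleton] at ht
      subst ht
      have e1 : (Tv H v).sum id - t = a := by rw [hsum]; ring
      rw [e1, hsum, hprod]
      unfold ptt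
      exact Prod.ext_iff.mpr ⟨by ring, by ring⟩
  · have h1 : (Tv H v).card = 1 := by
      have hle := Tv_card_le hdeg hv
      have hne : (Tv H v).Nonempty := ⟨t, ht⟩
      have := Finset.card_pos.mpr hne
      omega
    rw [if_neg h2, if_pos h1, if_neg h2]
    obtain ⟨a, hTv⟩ := Finset.card_eq_one.mp h1
    rw [hTv] at ht
    simp only [Finset.mem_singleton] at ht
    subst ht
    rw [hTv]
    simp

lemma sig_S_mem {v : ι} (h2 : (Dv H v).card = 2) (h1 : (Tv H v).card = 1) :
    loP H (Dv H v) < sig H v ∧ sig H v < hiP H (Dv H v) := by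
  unfold sig
  rw [if_pos ⟨h2, h1⟩]
  have hs := XY_spec H (Dv H v)
  split
  · exact ⟨hs.1, lt_trans hs.2.1 hs.2.2.1⟩
  · exact ⟨lt_trans hs.1 hs.2.1, hs.2.2.1⟩

lemma sig_fresh {v : ι} (h : ¬((Dv H v).card = 2 ∧ (Tv H v).card = 1)) :
    sig H v = mB H + 1/2 + nu H v := by
  unfold sig
  rw [if_neg h]

lemma prm_eq_parB {v : ι} {t : ℝ} (h : ¬((Dv H v).card = 2 ∧ (Tv H v).card = 1)) :
    prm H t v = parB H t v := by
  unfold prm parB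
  by_cases h2 : (Tv H v).card = 2
  · rw [if_pos h2, if_pos h2]
  · rw [if_neg h2, if_neg h2, sig_fresh h]

lemma ptt_below (s u : ℝ) : (ptt s u).2 ≤ ((ptt s u).1)^2 := by
  simp only [ptt]
  nlinarith [sq_nonneg (s - u)]

end S10
namespace S10
variable {ι : Type} [DecidableEq ι] {H : SimpleHypergraph ι}

lemma cls_pair (hrank : ∀ e ∈ H.E, e.card ≤ 3)
    (hdeg : ∀ v ∈ H.V, (H.E.filter (fun e => v ∈ e)).card ≤ 2)
    {e f : Finset ι} (he : e ∈ H.E) (hf : f ∈ cls H e) (hef : e ≠ f) :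
    cls H e = {e, f} := by
  apply Finset.Subset.antisymm
  · intro g hg
    by_cases hge : g = e
    · simp [hge]
    · have := partner_unique hrank hdeg he hg hf hge (Ne.symm hef)
      simp [this]
  · intro g hg
    rcases Finset.mem_insert.mp hg with rfl | hg
    · exact mem_cls_self he
    · simp only [Finset.mem_singleton] at hg
      exact hg ▸ hf

lemma SPc_pair {e f : Finset ι} : SPc' ({e, f} : Finset (Finset ι)) = e ∩ f := by
  ext x
  simp only [SPc', Finset.mem_filter, Finset.sup_insert, Finset.sup_singleton, id,
    Finset.mem_union, Finset.mem_inter, Finset.mem_insert, Finset.mem_singleton,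
    Finset.sup_eq_union]
  constructor
  · rintro ⟨h1, h2⟩
    exact ⟨h2 e (Or.inl rfl), h2 f (Or.inr rfl)⟩
  · rintro ⟨h1, h2⟩
    refine ⟨Or.inl h1, ?_⟩
    rintro g (rfl | rfl)
    · exact h1
    · exact h2

lemma sup_pair {e f : Finset ι} : (({e, f} : Finset (Finset ι)).sup id) = e ∪ f := by
  simp [Finset.sup_insert, Finset.sup_singleton, Finset.sup_eq_union]

lemma tPc_pair {e f : Finset ι} (htp : tp H f = tp H e) :
    tPc H ({e, f} : Finset (Finset ι)) = tp H e := by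
  unfold tPc
  have : ({e, f} : Finset (Finset ι)).image (tp H) = {tp H e} := by
    apply Finset.Subset.antisymm
    · intro x hx
      obtain ⟨g, hg, rfl⟩ := Finset.mem_image.mp hx
      rcases Finset.mem_insert.mp hg with rfl | hg
      · simp
      · simp only [Finset.mem_singleton] at hg
        subst hg
        simp [htp]
    · intro x hx
      simp only [Finset.mem_singleton] at hx
      subst hx
      exact Finset.mem_image_of_mem _ (by simp)
  rw [this, Finset.sum_singleton]
  rfl

lemma tp_pair_eq (hrank : ∀ e ∈ H.E, e.card ≤ 3)
    (hdeg : ∀ v ∈ H.V, (H.E.filter (fun e => v ∈ e)).card ≤ 2)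
    {e f : Finset ι} (he : e ∈ H.E) (hf : f ∈ cls H e) : tp H f = tp H e :=
  (tp_eq_iff (cls_subset e hf) he).mpr (cls_eq_of_mem hrank hdeg he hf)

lemma S_facts (hrank : ∀ e ∈ H.E, e.card ≤ 3)
    (hdeg : ∀ v ∈ H.V, (H.E.filter (fun e => v ∈ e)).card ≤ 2)
    {e f : Finset ι} (he : e ∈ H.E) (hf : f ∈ cls H e) (hef : e ≠ f)
    {b : ι} (hb : b ∈ e ∩ f) :
    Dv H b = {e, f} ∧ (Dv H b).card = 2 ∧ Tv H b = {tp H e} ∧ (Tv H b).card = 1 := by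
  have hfE : f ∈ H.E := cls_subset e hf
  have hDb : Dv H b = {e, f} :=
    Dv_pair hdeg he hfE hef (Finset.mem_inter.mp hb).1 (Finset.mem_inter.mp hb).2
  have hDc : (Dv H b).card = 2 := by rw [hDb]; exact Finset.card_pair hef
  have hTb : Tv H b = {tp H e} := by
    unfold Tv
    rw [hDb]
    apply Finset.Subset.antisymm
    · intro x hx
      obtain ⟨g, hg, rfl⟩ := Finset.mem_image.mp hx
      rcases Finset.mem_insert.mp hg with rfl | hg
      · simp
      · simp only [Finset.mem_singleton] at hg
        subst hg
        simp [tp_pair_eq hrank hdeg he hf]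
    · intro x hx
      simp only [Finset.mem_singleton] at hx
      subst hx
      exact Finset.mem_image_of_mem _ (by simp)
  exact ⟨hDb, hDc, hTb, by rw [hTb]; simp⟩

lemma alf_S (hrank : ∀ e ∈ H.E, e.card ≤ 3)
    (hdeg : ∀ v ∈ H.V, (H.E.filter (fun e => v ∈ e)).card ≤ 2)
    {e f : Finset ι} (he : e ∈ H.E) (hf : f ∈ cls H e) (hef : e ≠ f)
    {b : ι} (hb : b ∈ e ∩ f) :
    alf H b = ptt (tp H e) (sig H b) ∧
      loP H ({e, f} : Finset (Finset ι)) < sig H b ∧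
      sig H b < hiP H ({e, f} : Finset (Finset ι)) := by
  obtain ⟨hDb, hDc, hTb, hTc⟩ := S_facts hrank hdeg he hf hef hb
  have hbV : b ∈ H.V := H.edge_subset e he (Finset.mem_inter.mp hb).1
  have ht : tp H e ∈ Tv H b := by rw [hTb]; simp
  have h1 : alf H b = ptt (tp H e) (prm H (tp H e) b) := alf_eq_ptt hdeg hbV ht
  have h2 : prm H (tp H e) b = sig H b := by
    unfold prm
    rw [if_neg (by omega : ¬(Tv H b).card = 2)]
  obtain ⟨hm1, hm2⟩ := sig_S_mem hDc hTc
  rw [hDb] at hm1 hm2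
  exact ⟨h2 ▸ h1, hm1, hm2⟩

lemma outer_not_S (hrank : ∀ e ∈ H.E, e.card ≤ 3)
    (hdeg : ∀ v ∈ H.V, (H.E.filter (fun e => v ∈ e)).card ≤ 2)
    {e f : Finset ι} (he : e ∈ H.E) (hf : f ∈ cls H e) (hef : e ≠ f)
    {v : ι} (hvf : v ∈ f) (hve : v ∉ e) :
    ¬((Dv H v).card = 2 ∧ (Tv H v).card = 1) := by
  rintro ⟨hD2, hT1⟩
  have hfE : f ∈ H.E := cls_subset e hf
  obtain ⟨g₁, g₂, hg12, hDv⟩ := Finset.card_eq_two.mp hD2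
  have hfD : f ∈ Dv H v := mem_Dv.mpr ⟨hfE, hvf⟩
  have htpeq : ∀ g ∈ Dv H v, tp H g = tp H f := by
    intro g hg
    have h1 : tp H g ∈ Tv H v := Finset.mem_image_of_mem _ hg
    have h2 : tp H f ∈ Tv H v := Finset.mem_image_of_mem _ hfD
    obtain ⟨a, hTv⟩ := Finset.card_eq_one.mp hT1
    rw [hTv] at h1 h2
    simp only [Finset.mem_singleton] at h1 h2
    rw [h1, h2]
  -- find the edge other than f
  rw [hDv] at hfD
  have hgother : ∃ g, g ∈ Dv H v ∧ g ≠ f := by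
    rcases Finset.mem_insert.mp hfD with rfl | hfD'
    · exact ⟨g₂, by rw [hDv]; simp, fun h => hg12 h.symm⟩
    · simp only [Finset.mem_singleton] at hfD'
      subst hfD'
      exact ⟨g₁, by rw [hDv]; simp, hg12⟩
  obtain ⟨g, hgD, hgf⟩ := hgother
  have hgE : g ∈ H.E := (mem_Dv.mp hgD).1
  have hvg : v ∈ g := (mem_Dv.mp hgD).2
  have : cls H g = cls H e := by
    have h1 : tp H g = tp H f := htpeq g hgD
    have h2 : tp H f = tp H e := tp_pair_eq hrank hdeg he hf
    exact (tp_eq_iff hgE he).mp (h1.trans h2)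
  have hgcls : g ∈ cls H e := by
    rw [← this]; exact mem_cls_self hgE
  rw [cls_pair hrank hdeg he hf hef] at hgcls
  rcases Finset.mem_insert.mp hgcls with rfl | hgcls
  · exact hve hvg
  · simp only [Finset.mem_singleton] at hgcls
    exact hgf hgcls

lemma alf_outer (hrank : ∀ e ∈ H.E, e.card ≤ 3)
    (hdeg : ∀ v ∈ H.V, (H.E.filter (fun e => v ∈ e)).card ≤ 2)
    {e f : Finset ι} (he : e ∈ H.E) (hf : f ∈ cls H e) (hef : e ≠ f)
    {v : ι} (hvf : v ∈ f) (hve : v ∉ e) :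
    alf H v = ptt (tp H e) (parB H (tp H e) v) ∧
      parB H (tp H e) v ∈ OB H ({e, f} : Finset (Finset ι)) := by
  have hfE : f ∈ H.E := cls_subset e hf
  have hvV : v ∈ H.V := H.edge_subset f hfE hvf
  have ht : tp H e ∈ Tv H v := by
    have := mem_Tv hfE hvf
    rwa [tp_pair_eq hrank hdeg he hf] at this
  have h1 : alf H v = ptt (tp H e) (prm H (tp H e) v) := alf_eq_ptt hdeg hvV ht
  have h2 : prm H (tp H e) v = parB H (tp H e) v :=
    prm_eq_parB (outer_not_S hrank hdeg he hf hef hvf hve)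
  have h3 : parB H (tp H e) v ∈ OB H ({e, f} : Finset (Finset ι)) := by
    unfold OB
    rw [tPc_pair (tp_pair_eq hrank hdeg he hf)]
    apply Finset.mem_image_of_mem
    rw [Finset.mem_sdiff, SPc_pair, sup_pair]
    exact ⟨Finset.mem_union_right _ hvf, fun h => hve (Finset.mem_inter.mp h).1⟩
  exact ⟨h2 ▸ h1, h3⟩

lemma OB_card_le (hrank : ∀ e ∈ H.E, e.card ≤ 3)
    {e f : Finset ι} (he : e ∈ H.E) (hfE : f ∈ H.E) (hS2 : (e ∩ f).card = 2) :
    (OB H ({e, f} : Finset (Finset ι))).card ≤ 2 := by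
  refine le_trans Finset.card_image_le ?_
  rw [sup_pair, SPc_pair]
  have h1 : ((e ∪ f) \ (e ∩ f)).card = (e ∪ f).card - (e ∩ f).card :=
    Finset.card_sdiff_of_subset (le_trans Finset.inter_subset_left Finset.subset_union_left)
  have h2 := Finset.card_union_add_card_inter e f
  have h3 := hrank e he
  have h4 := hrank f hfE
  omega

lemma mem_le2_ends {s : Finset ℝ} (h : s.card ≤ 2) {x : ℝ} (hx : x ∈ s) :
    x = s.min' ⟨x, hx⟩ ∨ x = s.max' ⟨x, hx⟩ := by
  by_contra hc
  push_neg at hc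
  have hne : s.Nonempty := ⟨x, hx⟩
  have hmm : s.min' hne ≠ s.max' hne := by
    intro heq
    have h1 := Finset.min'_le s x hx
    have h2 := Finset.le_max' s x hx
    exact hc.1 (le_antisymm (heq ▸ h2) h1)
  have hsub : ({s.min' hne, s.max' hne, x} : Finset ℝ) ⊆ s := by
    intro y hy
    simp only [Finset.mem_insert, Finset.mem_singleton] at hy
    rcases hy with rfl | rfl | rfl
    · exact Finset.min'_mem s hne
    · exact Finset.max'_mem s hne
    · exact hx
  have hcard : ({s.min' hne, s.max' hne, x} : Finset ℝ).card = 3 := by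
    rw [Finset.card_insert_of_notMem (by
          simp only [Finset.mem_insert, Finset.mem_singleton]
          push_neg
          exact ⟨hmm, fun h => hc.1 h.symm⟩),
        Finset.card_insert_of_notMem (by
          simp only [Finset.mem_singleton]
          exact fun h => hc.2 h.symm)]
    simp
  have := Finset.card_le_card hsub
  omega

lemma OB_not_Ioo (hrank : ∀ e ∈ H.E, e.card ≤ 3)
    {e f : Finset ι} (he : e ∈ H.E) (hfE : f ∈ H.E) (hS2 : (e ∩ f).card = 2)
    {x : ℝ} (hx : x ∈ OB H ({e, f} : Finset (Finset ι))) :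
    x ∉ Set.Ioo (loP H ({e, f} : Finset (Finset ι)))
      (hiP H ({e, f} : Finset (Finset ι))) := by
  intro hmem
  obtain ⟨hlo, hhi⟩ := hmem
  have hne : (OB H ({e, f} : Finset (Finset ι))).Nonempty := ⟨x, hx⟩
  have hlo' : loP H ({e, f} : Finset (Finset ι)) = (OB H _).min' hne := by
    unfold loP; rw [dif_pos hne]
  rcases mem_le2_ends (OB_card_le hrank he hfE hS2) hx with h | h
  · rw [hlo', ← h] at hlo
    exact lt_irrefl x hlo
  · have hhi' : hiP H ({e, f} : Finset (Finset ι)) ≤ x := by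
      unfold hiP
      rw [dif_pos hne]
      by_cases heq : (OB H ({e, f} : Finset (Finset ι))).max' hne =
          (OB H ({e, f} : Finset (Finset ι))).min' hne
      · rw [if_pos heq]
        rw [hlo'] at hlo
        exact absurd (h.trans heq) (ne_of_gt hlo)
      · rw [if_neg heq, ← h]
    exact absurd hhi (not_lt.mpr hhi')

end S10
namespace S10
variable {ι : Type} [DecidableEq ι] {H : SimpleHypergraph ι}

lemma loP_le_of_mem {P : Finset (Finset ι)} {x : ℝ} (hx : x ∈ OB H P) :
    loP H P ≤ x := by
  unfold loP
  rw [dif_pos ⟨x, hx⟩]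
  exact Finset.min'_le _ _ hx

lemma le_hiP_of_mem {P : Finset (Finset ι)} {x : ℝ} (hx : x ∈ OB H P) :
    x ≤ hiP H P := by
  unfold hiP
  rw [dif_pos ⟨x, hx⟩]
  by_cases heq : (OB H P).max' ⟨x, hx⟩ = (OB H P).min' ⟨x, hx⟩
  · rw [if_pos heq]
    have := Finset.le_max' _ x hx
    rw [heq] at this
    linarith
  · rw [if_neg heq]
    exact Finset.le_max' _ x hx

lemma outers_ne (hrank : ∀ e ∈ H.E, e.card ≤ 3)
    (hdeg : ∀ v ∈ H.V, (H.E.filter (fun e => v ∈ e)).card ≤ 2)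
    (hNT : ¬ ∃ a b c d : ι, [a, b, c, d].Pairwise (· ≠ ·) ∧
          ({a, b, c} : Finset ι) ∈ H.E ∧ ({b, c, d} : Finset ι) ∈ H.E ∧
          (({a, d} : Finset ι) ∈ H.E ∨
            ∃ f : ι, f ∉ ({a, b, c, d} : Finset ι) ∧ ({a, d, f} : Finset ι) ∈ H.E))
    (hNP : ¬ ∃ a b₁ b₂ c₁ c₂ d : ι, [a, b₁, b₂, c₁, c₂, d].Pairwise (· ≠ ·) ∧
          ({a, b₁, c₁} : Finset ι) ∈ H.E ∧ ({b₁, c₁, d} : Finset ι) ∈ H.E ∧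
          ({a, b₂, c₂} : Finset ι) ∈ H.E ∧ ({b₂, c₂, d} : Finset ι) ∈ H.E)
    {e f : Finset ι} (he : e ∈ H.E) (hfE : f ∈ H.E)
    {a d : ι} (hae : a ∈ e) (haf : a ∉ f) (hdf : d ∈ f) (hde : d ∉ e)
    {t : ℝ} (hta : t ∈ Tv H a) (htd : t ∈ Tv H d) :
    parB H t a ≠ parB H t d := by
  have had : a ≠ d := fun h => haf (h ▸ hdf)
  have haV : a ∈ H.V := H.edge_subset e he hae
  have hdV : d ∈ H.V := H.edge_subset f hfE hdf
  unfold parB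
  by_cases ca : (Tv H a).card = 2 <;> by_cases cd : (Tv H d).card = 2
  · rw [if_pos ca, if_pos cd]
    intro heq
    obtain ⟨hra, _, _⟩ := Tv_repr ca hta
    obtain ⟨hrd, _, _⟩ := Tv_repr cd htd
    have : Tv H a = Tv H d := by rw [hra, hrd, heq]
    exact key_forced hrank hdeg hNT hNP had this ca
  · rw [if_pos ca, if_neg cd]
    obtain ⟨_, _, hmem⟩ := Tv_repr ca hta
    have h1 : (Tv H a).sum id - t < mB H := TS_lt_mB (Tv_subset_TS hmem)
    have h2 := nu_nonneg (H := H) d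
    intro heq
    rw [heq] at h1
    linarith
  · rw [if_neg ca, if_pos cd]
    obtain ⟨_, _, hmem⟩ := Tv_repr cd htd
    have h1 : (Tv H d).sum id - t < mB H := TS_lt_mB (Tv_subset_TS hmem)
    have h2 := nu_nonneg (H := H) a
    intro heq
    rw [← heq] at h1
    linarith
  · rw [if_neg ca, if_neg cd]
    intro heq
    exact had (nu_inj haV hdV (by linarith))

lemma sig_S_ne (hrank : ∀ e ∈ H.E, e.card ≤ 3)
    (hdeg : ∀ v ∈ H.V, (H.E.filter (fun e => v ∈ e)).card ≤ 2)
    {e f : Finset ι} (he : e ∈ H.E) (hf : f ∈ cls H e) (hef : e ≠ f)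
    {b c : ι} (hbc : b ≠ c) (hS : e ∩ f = {b, c}) : sig H b ≠ sig H c := by
  have hbS : b ∈ e ∩ f := by rw [hS]; simp
  have hcS : c ∈ e ∩ f := by rw [hS]; simp
  obtain ⟨hDb, hDb2, hTb, hTb1⟩ := S_facts hrank hdeg he hf hef hbS
  obtain ⟨hDc, hDc2, hTc, hTc1⟩ := S_facts hrank hdeg he hf hef hcS
  have hbV : b ∈ H.V := H.edge_subset e he (Finset.mem_inter.mp hbS).1
  have hcV : c ∈ H.V := H.edge_subset e he (Finset.mem_inter.mp hcS).1
  have hnu : nu H b ≠ nu H c := fun h => hbc (nu_inj hbV hcV h)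
  have hSP : SPc' (Dv H b) = ({b, c} : Finset ι) := by rw [hDb, SPc_pair, hS]
  have hSPc : SPc' (Dv H c) = ({b, c} : Finset ι) := by rw [hDc, SPc_pair, hS]
  have hspec := XY_spec H (Dv H b)
  have hDbc : Dv H c = Dv H b := by rw [hDb, hDc]
  have hXc : XY H (Dv H c) = XY H (Dv H b) := by rw [hDbc]
  have hcondb : (∀ w ∈ SPc' (Dv H b), w ≠ b → nu H b < nu H w) ↔ nu H b < nu H c := by
    rw [hSP]
    constructor
    · intro h
      exact h c (by simp) (fun hc' => hbc hc'.symm)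
    · intro h w hw hwb
      rcases Finset.mem_insert.mp hw with rfl | hw
      · exact absurd rfl hwb
      · simp only [Finset.mem_singleton] at hw
        subst hw
        exact h
  have hcondc : (∀ w ∈ SPc' (Dv H c), w ≠ c → nu H c < nu H w) ↔ nu H c < nu H b := by
    rw [hSPc]
    constructor
    · intro h
      exact h b (by simp) hbc
    · intro h w hw hwc
      rcases Finset.mem_insert.mp hw with rfl | hw
      · exact h
      · simp only [Finset.mem_singleton] at hw
        subst hw
        exact absurd rfl hwc
  have hb_eq : sig H b =
      if nu H b < nu H c then (XY H (Dv H b)).1 else (XY H (Dv H b)).2 := by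
    unfold sig
    rw [if_pos (show (Dv H b).card = 2 ∧ (Tv H b).card = 1 from ⟨hDb2, hTb1⟩)]
    by_cases hν : nu H b < nu H c
    · rw [if_pos (hcondb.mpr hν), if_pos hν]
    · rw [if_neg (fun hh => hν (hcondb.mp hh)), if_neg hν]
  have hc_eq : sig H c =
      if nu H c < nu H b then (XY H (Dv H b)).1 else (XY H (Dv H b)).2 := by
    unfold sig
    rw [if_pos (show (Dv H c).card = 2 ∧ (Tv H c).card = 1 from ⟨hDc2, hTc1⟩)]
    by_cases hν : nu H c < nu H b
    · rw [if_pos (hcondc.mpr hν), if_pos hν, hXc]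
    · rw [if_neg (fun hh => hν (hcondc.mp hh)), if_neg hν, hXc]
  rcases lt_or_gt_of_ne hnu with hν | hν
  · rw [hb_eq, hc_eq, if_pos hν, if_neg (by push_neg; exact hν.le)]
    exact ne_of_lt hspec.2.1
  · rw [hb_eq, hc_eq, if_neg (by push_neg; exact hν.le), if_pos hν]
    exact ne_of_gt hspec.2.1
end S10
namespace S10
variable {ι : Type} [DecidableEq ι] {H : SimpleHypergraph ι}

lemma mem_xse_bounds {e : Finset ι} {x : ℝ} (hx : x ∈ xse H e) :
    loe H e ≤ x ∧ x ≤ hie H e := by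
  have hne : (xse H e).Nonempty := ⟨x, hx⟩
  constructor
  · unfold loe
    rw [dif_pos hne]
    exact Finset.min'_le _ _ hx
  · unfold hie
    rw [dif_pos hne]
    by_cases heq : (xse H e).max' hne = (xse H e).min' hne
    · rw [if_pos heq]
      have := Finset.le_max' _ x hx
      rw [heq] at this
      linarith
    · rw [if_neg heq]
      exact Finset.le_max' _ x hx

lemma alf_mem_bet (hdeg : ∀ v ∈ H.V, (H.E.filter (fun e => v ∈ e)).card ≤ 2)
    {v : ι} (hv : v ∈ H.V) {e : Finset ι} (he : e ∈ H.E) (hve : v ∈ e) :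
    alf H v ∈ bet H e := by
  have ht : tp H e ∈ Tv H v := mem_Tv he hve
  have half := alf_eq_ptt hdeg hv ht
  rw [mem_bet_iff]
  refine ⟨by rw [half]; exact ptt_on _ _, ?_⟩
  have hx : (alf H v).1 ∈ xse H e := Finset.mem_image_of_mem _ hve
  exact mem_xse_bounds hx

lemma excl (hrank : ∀ e ∈ H.E, e.card ≤ 3)
    (hdeg : ∀ v ∈ H.V, (H.E.filter (fun e => v ∈ e)).card ≤ 2)
    (hNT : ¬ ∃ a b c d : ι, [a, b, c, d].Pairwise (· ≠ ·) ∧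
          ({a, b, c} : Finset ι) ∈ H.E ∧ ({b, c, d} : Finset ι) ∈ H.E ∧
          (({a, d} : Finset ι) ∈ H.E ∨
            ∃ f : ι, f ∉ ({a, b, c, d} : Finset ι) ∧ ({a, d, f} : Finset ι) ∈ H.E))
    (hNP : ¬ ∃ a b₁ b₂ c₁ c₂ d : ι, [a, b₁, b₂, c₁, c₂, d].Pairwise (· ≠ ·) ∧
          ({a, b₁, c₁} : Finset ι) ∈ H.E ∧ ({b₁, c₁, d} : Finset ι) ∈ H.E ∧
          ({a, b₂, c₂} : Finset ι) ∈ H.E ∧ ({b₂, c₂, d} : Finset ι) ∈ H.E)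
    {e f : Finset ι} (he : e ∈ H.E) (hf : f ∈ cls H e) (hef : e ≠ f)
    {v : ι} (hvf : v ∈ f) (hve : v ∉ e) :
    (alf H v).1 < loe H e ∨ hie H e < (alf H v).1 := by
  have hfE : f ∈ H.E := cls_subset e hf
  have hS2 : (e ∩ f).card = 2 := pair_card hrank he hef hf
  obtain ⟨b, c, hbc, hS⟩ := Finset.card_eq_two.mp hS2
  have hbS : b ∈ e ∩ f := by rw [hS]; simp
  have hcS : c ∈ e ∩ f := by rw [hS]; simp
  have hbe : b ∈ e := (Finset.mem_inter.mp hbS).1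
  have hce : c ∈ e := (Finset.mem_inter.mp hcS).1
  obtain ⟨hav, hOBv⟩ := alf_outer hrank hdeg he hf hef hvf hve
  obtain ⟨hab, hlob, hhib⟩ := alf_S hrank hdeg he hf hef hbS
  obtain ⟨hac, hloc, hhic⟩ := alf_S hrank hdeg he hf hef hcS
  have hsbc : sig H b ≠ sig H c := sig_S_ne hrank hdeg he hf hef hbc hS
  have hxv : (alf H v).1 = (tp H e + parB H (tp H e) v)/2 := by rw [hav]; rfl
  have hnIoo := OB_not_Ioo hrank he hfE hS2 hOBv
  have hcases : parB H (tp H e) v ≤ loP H ({e, f} : Finset (Finset ι)) ∨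
      hiP H ({e, f} : Finset (Finset ι)) ≤ parB H (tp H e) v := by
    by_contra hcon
    push_neg at hcon
    exact hnIoo ⟨hcon.1, hcon.2⟩
  have hW : ∀ w ∈ e,
      ((alf H w).1 = (tp H e + sig H w)/2 ∧
        loP H ({e, f} : Finset (Finset ι)) < sig H w ∧
        sig H w < hiP H ({e, f} : Finset (Finset ι))) ∨
      ((alf H w).1 = (tp H e + parB H (tp H e) w)/2 ∧
        parB H (tp H e) w ∈ OB H ({e, f} : Finset (Finset ι)) ∧
        parB H (tp H e) w ≠ parB H (tp H e) v) := by
    intro w hw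
    by_cases hwf : w ∈ f
    · left
      obtain ⟨haw, hlow, hhiw⟩ := alf_S hrank hdeg he hf hef (Finset.mem_inter.mpr ⟨hw, hwf⟩)
      exact ⟨by rw [haw]; rfl, hlow, hhiw⟩
    · right
      have hfe' : e ∈ cls H f := mem_cls_symm he hf
      obtain ⟨haw, hOBw⟩ := alf_outer hrank hdeg hfE hfe' (Ne.symm hef) hw hwf
      have htpf : tp H f = tp H e := tp_pair_eq hrank hdeg he hf
      rw [htpf] at haw hOBw
      have hOB' : OB H ({f, e} : Finset (Finset ι)) = OB H ({e, f} : Finset (Finset ι)) := by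
        rw [Finset.pair_comm]
      rw [hOB'] at hOBw
      refine ⟨by rw [haw]; rfl, hOBw, ?_⟩
      have hta : tp H e ∈ Tv H w := mem_Tv he hw
      have htd : tp H e ∈ Tv H v := by
        have := mem_Tv hfE hvf
        rwa [htpf] at this
      exact outers_ne hrank hdeg hNT hNP he hfE hw hwf hvf hve hta htd
  have claim : (∀ w ∈ e, (alf H w).1 < (alf H v).1) ∨
      (∀ w ∈ e, (alf H v).1 < (alf H w).1) := by
    rcases hcases with hlo | hhi
    · right
      intro w hw
      rcases hW w hw with ⟨hxw, hloww, _⟩ | ⟨hxw, hOBw, hneq⟩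
      · rw [hxw, hxv]; linarith
      · have h1 := loP_le_of_mem hOBw
        rw [hxw, hxv]
        have : parB H (tp H e) v < parB H (tp H e) w :=
          lt_of_le_of_ne (le_trans hlo h1) (Ne.symm hneq)
        linarith
    · left
      intro w hw
      rcases hW w hw with ⟨hxw, _, hhiw⟩ | ⟨hxw, hOBw, hneq⟩
      · rw [hxw, hxv]; linarith
      · have h1 := le_hiP_of_mem hOBw
        rw [hxw, hxv]
        have : parB H (tp H e) w < parB H (tp H e) v :=
          lt_of_le_of_ne (le_trans h1 hhi) hneq
        linarith
  have hxb : (alf H b).1 ∈ xse H e := Finset.mem_image_of_mem _ hbe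
  have hxc : (alf H c).1 ∈ xse H e := Finset.mem_image_of_mem _ hce
  have hne_xse : (xse H e).Nonempty := ⟨_, hxb⟩
  have hxbc : (alf H b).1 ≠ (alf H c).1 := by
    rw [hab, hac]
    intro hh
    apply hsbc
    simp only [ptt] at hh
    linarith
  have hmmne : (xse H e).max' hne_xse ≠ (xse H e).min' hne_xse := by
    intro heq
    apply hxbc
    have h1 := Finset.min'_le _ _ hxb
    have h2 := Finset.le_max' _ _ hxb
    have h3 := Finset.min'_le _ _ hxc
    have h4 := Finset.le_max' _ _ hxc
    rw [heq] at h2 h4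
    have : (alf H b).1 = (xse H e).min' hne_xse := le_antisymm h2 h1
    have h5 : (alf H c).1 = (xse H e).min' hne_xse := le_antisymm h4 h3
    rw [this, h5]
  rcases claim with hall | hall
  · right
    have hhie : hie H e = (xse H e).max' hne_xse := by
      unfold hie
      rw [dif_pos hne_xse, if_neg hmmne]
    obtain ⟨w, hw, hwmax⟩ := Finset.mem_image.mp (Finset.max'_mem _ hne_xse)
    rw [hhie, ← hwmax]
    exact hall w hw
  · left
    have hloe : loe H e = (xse H e).min' hne_xse := by
      unfold loe
      rw [dif_pos hne_xse]
    obtain ⟨w, hw, hwmin⟩ := Finset.mem_image.mp (Finset.min'_mem _ hne_xse)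
    rw [hloe, ← hwmin]
    exact hall w hw
end S10
namespace S10
variable {ι : Type} [DecidableEq ι] {H : SimpleHypergraph ι}

lemma alf_deg0 {v : ι} (h : Tv H v = ∅) : alf H v = (nu H v, (nu H v)^2 + 1) := by
  unfold alf
  rw [if_neg (by rw [h]; simp), if_neg (by rw [h]; simp)]

lemma alf_not_mem_bet (hrank : ∀ e ∈ H.E, e.card ≤ 3)
    (hdeg : ∀ v ∈ H.V, (H.E.filter (fun e => v ∈ e)).card ≤ 2)
    (hNT : ¬ ∃ a b c d : ι, [a, b, c, d].Pairwise (· ≠ ·) ∧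
          ({a, b, c} : Finset ι) ∈ H.E ∧ ({b, c, d} : Finset ι) ∈ H.E ∧
          (({a, d} : Finset ι) ∈ H.E ∨
            ∃ f : ι, f ∉ ({a, b, c, d} : Finset ι) ∧ ({a, d, f} : Finset ι) ∈ H.E))
    (hNP : ¬ ∃ a b₁ b₂ c₁ c₂ d : ι, [a, b₁, b₂, c₁, c₂, d].Pairwise (· ≠ ·) ∧
          ({a, b₁, c₁} : Finset ι) ∈ H.E ∧ ({b₁, c₁, d} : Finset ι) ∈ H.E ∧
          ({a, b₂, c₂} : Finset ι) ∈ H.E ∧ ({b₂, c₂, d} : Finset ι) ∈ H.E)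
    {v : ι} (hv : v ∈ H.V) {e : Finset ι} (he : e ∈ H.E) (hve : v ∉ e) :
    alf H v ∉ bet H e := by
  intro hmem
  rw [mem_bet_iff] at hmem
  obtain ⟨hline, hlo, hhi⟩ := hmem
  have hcommon : tp H e ∈ Tv H v → False := by
    intro hin
    obtain ⟨e', he'D, he'tp⟩ := Finset.mem_image.mp hin
    have he'E : e' ∈ H.E := (mem_Dv.mp he'D).1
    have hve' : v ∈ e' := (mem_Dv.mp he'D).2
    have hee' : e ≠ e' := fun h => hve (h ▸ hve')
    have hf : e' ∈ cls H e := by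
      rw [(tp_eq_iff he he'E).mp he'tp.symm]
      exact mem_cls_self he'E
    rcases excl hrank hdeg hNT hNP he hf hee' hve' hve with h | h
    · linarith
    · linarith
  by_cases h0 : (Tv H v).Nonempty
  · obtain ⟨t', ht'⟩ := h0
    have half := alf_eq_ptt hdeg hv ht'
    rw [half] at hline
    rcases ptt_online hline with h | h
    · exact hcommon (h ▸ ht')
    · by_cases c2 : (Tv H v).card = 2
      · have hprm : prm H t' v = (Tv H v).sum id - t' := by
          unfold prm; rw [if_pos c2]
        obtain ⟨_, _, hmem2⟩ := Tv_repr c2 ht'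
        rw [hprm] at h
        exact hcommon (h ▸ hmem2)
      · have hprm : prm H t' v = sig H v := by
          unfold prm; rw [if_neg c2]
        rw [hprm] at h
        exact sig_not_TS v (h ▸ TS_mem he)
  · rw [Finset.not_nonempty_iff_eq_empty] at h0
    rw [alf_deg0 h0] at hline hlo hhi
    simp only at hline
    have := tangent_below (tp H e) (nu H v)
    nlinarith [hline, this]

lemma alf_inj (hrank : ∀ e ∈ H.E, e.card ≤ 3)
    (hdeg : ∀ v ∈ H.V, (H.E.filter (fun e => v ∈ e)).card ≤ 2)
    (hNT : ¬ ∃ a b c d : ι, [a, b, c, d].Pairwise (· ≠ ·) ∧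
          ({a, b, c} : Finset ι) ∈ H.E ∧ ({b, c, d} : Finset ι) ∈ H.E ∧
          (({a, d} : Finset ι) ∈ H.E ∨
            ∃ f : ι, f ∉ ({a, b, c, d} : Finset ι) ∧ ({a, d, f} : Finset ι) ∈ H.E))
    (hNP : ¬ ∃ a b₁ b₂ c₁ c₂ d : ι, [a, b₁, b₂, c₁, c₂, d].Pairwise (· ≠ ·) ∧
          ({a, b₁, c₁} : Finset ι) ∈ H.E ∧ ({b₁, c₁, d} : Finset ι) ∈ H.E ∧
          ({a, b₂, c₂} : Finset ι) ∈ H.E ∧ ({b₂, c₂, d} : Finset ι) ∈ H.E) :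
    Set.InjOn (alf H) ↑H.V := by
  intro v hv' w hw' heq
  have hv : v ∈ H.V := hv'
  have hw : w ∈ H.V := hw'
  by_contra hvw
  by_cases h0v : (Tv H v).Nonempty <;> by_cases h0w : (Tv H w).Nonempty
  · -- both on lines
    obtain ⟨tv, htv⟩ := h0v
    obtain ⟨tw, htw⟩ := h0w
    have halfv := alf_eq_ptt hdeg hv htv
    have halfw := alf_eq_ptt hdeg hw htw
    have hpq : ptt tv (prm H tv v) = ptt tw (prm H tw w) := by
      rw [← halfv, ← halfw, heq]
    have hTSv : tv ∈ TS H := Tv_subset_TS htv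
    have hTSw : tw ∈ TS H := Tv_subset_TS htw
    by_cases c2v : (Tv H v).card = 2 <;> by_cases c2w : (Tv H w).card = 2
    · -- both forced
      have hpv : prm H tv v = (Tv H v).sum id - tv := by unfold prm; rw [if_pos c2v]
      have hpw : prm H tw w = (Tv H w).sum id - tw := by unfold prm; rw [if_pos c2w]
      obtain ⟨hrv, _, _⟩ := Tv_repr c2v htv
      obtain ⟨hrw, _, _⟩ := Tv_repr c2w htw
      have hv_pair : Tv H v = {tv, prm H tv v} := by rw [hpv]; exact hrv
      have hw_pair : Tv H w = {tw, prm H tw w} := by rw [hpw]; exact hrw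
      have hTT : Tv H v = Tv H w := by
        rcases ptt_inj hpq with ⟨h1, h2⟩ | ⟨h1, h2⟩
        · rw [hv_pair, hw_pair, h2, h1]
        · rw [hv_pair, hw_pair, h2, h1]
          exact Finset.pair_comm _ _
      exact key_forced hrank hdeg hNT hNP hvw hTT c2v
    · -- v forced, w free
      have hpv : prm H tv v = (Tv H v).sum id - tv := by unfold prm; rw [if_pos c2v]
      have hpw : prm H tw w = sig H w := by unfold prm; rw [if_neg c2w]
      obtain ⟨_, _, hmemv⟩ := Tv_repr c2v htv
      rcases ptt_inj hpq with ⟨h1, h2⟩ | ⟨h1, h2⟩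
      · rw [hpv] at h2; rw [hpw] at h2
        exact sig_not_TS w (h2 ▸ Tv_subset_TS hmemv)
      · rw [hpw] at h1
        exact sig_not_TS w (h1 ▸ hTSv)
    · -- v free, w forced
      have hpv : prm H tv v = sig H v := by unfold prm; rw [if_neg c2v]
      have hpw : prm H tw w = (Tv H w).sum id - tw := by unfold prm; rw [if_pos c2w]
      obtain ⟨_, _, hmemw⟩ := Tv_repr c2w htw
      rcases ptt_inj hpq with ⟨h1, h2⟩ | ⟨h1, h2⟩
      · rw [hpv] at h2; rw [hpw] at h2
        exact sig_not_TS v (h2.symm ▸ Tv_subset_TS hmemw)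
      · rw [hpv] at h2
        exact sig_not_TS v (h2 ▸ hTSw)
    · -- both free
      have hpv : prm H tv v = sig H v := by unfold prm; rw [if_neg c2v]
      have hpw : prm H tw w = sig H w := by unfold prm; rw [if_neg c2w]
      have hT1v : (Tv H v).card = 1 := by
        have := Tv_card_le hdeg hv
        have := Finset.card_pos.mpr ⟨tv, htv⟩
        omega
      have hT1w : (Tv H w).card = 1 := by
        have := Tv_card_le hdeg hw
        have := Finset.card_pos.mpr ⟨tw, htw⟩
        omega
      rcases ptt_inj hpq with ⟨h1, h2⟩ | ⟨h1, h2⟩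
      · -- same class parameter, equal sig
        rw [hpv, hpw] at h2
        subst h1
        -- now tv is common class parameter; sig v = sig w
        have hTvv : Tv H v = {tv} := by
          obtain ⟨a, ha⟩ := Finset.card_eq_one.mp hT1v
          rw [ha] at htv
          simp only [Finset.mem_singleton] at htv
          rw [ha, htv]
        have hTww : Tv H w = {tv} := by
          obtain ⟨a, ha⟩ := Finset.card_eq_one.mp hT1w
          rw [ha] at htw
          simp only [Finset.mem_singleton] at htw
          rw [ha, htw]
        by_cases hv2 : (Dv H v).card = 2 <;> by_cases hw2 : (Dv H w).card = 2
        · -- both are shared vertices of the same pair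
          obtain ⟨e, f, hef, hDv⟩ := Finset.card_eq_two.mp hv2
          have heD : e ∈ Dv H v := by rw [hDv]; simp
          have hfD : f ∈ Dv H v := by rw [hDv]; simp
          have heE : e ∈ H.E := (mem_Dv.mp heD).1
          have hfE : f ∈ H.E := (mem_Dv.mp hfD).1
          have hve : v ∈ e := (mem_Dv.mp heD).2
          have hvf : v ∈ f := (mem_Dv.mp hfD).2
          have htpe : tp H e = tv := by
            have : tp H e ∈ Tv H v := Finset.mem_image_of_mem _ heD
            rw [hTvv] at this
            simpa using this
          have htpf : tp H f = tv := by
            have : tp H f ∈ Tv H v := Finset.mem_image_of_mem _ hfD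
            rw [hTvv] at this
            simpa using this
          have hfcls : f ∈ cls H e := by
            rw [(tp_eq_iff heE hfE).mp (htpe.trans htpf.symm)]
            exact mem_cls_self hfE
          have hclse : cls H e = {e, f} := cls_pair hrank hdeg heE hfcls hef
          have hDw : Dv H w ⊆ Dv H v := by
            intro g hg
            have hgE : g ∈ H.E := (mem_Dv.mp hg).1
            have : tp H g ∈ Tv H w := Finset.mem_image_of_mem _ hg
            rw [hTww] at this
            simp only [Finset.mem_singleton] at this
            have : g ∈ cls H e := by
              rw [(tp_eq_iff heE hgE).mp (htpe.trans this.symm)]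
              exact mem_cls_self hgE
            rw [hclse] at this
            rw [hDv]
            exact this
          have hDweq : Dv H w = Dv H v := Finset.eq_of_subset_of_card_le hDw (by omega)
          have hwe : w ∈ e := (mem_Dv.mp (hDweq ▸ heD : e ∈ Dv H w)).2
          have hwf : w ∈ f := (mem_Dv.mp (hDweq ▸ hfD : f ∈ Dv H w)).2
          have hScard : (e ∩ f).card = 2 := pair_card hrank heE hef hfcls
          have hSsub : ({v, w} : Finset ι) ⊆ e ∩ f := by
            intro x hx
            rcases Finset.mem_insert.mp hx with rfl | hx
            · exact Finset.mem_inter.mpr ⟨hve, hvf⟩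
            · simp only [Finset.mem_singleton] at hx
              subst hx
              exact Finset.mem_inter.mpr ⟨hwe, hwf⟩
          have hSeq : e ∩ f = {v, w} := by
            refine (Finset.eq_of_subset_of_card_le hSsub ?_).symm
            rw [Finset.card_pair hvw]
            omega
          exact sig_S_ne hrank hdeg heE hfcls hef hvw hSeq h2
        · -- v shared, w outer: w's parameter lies outside the open interval
          obtain ⟨e, f, hef, hDv⟩ := Finset.card_eq_two.mp hv2
          have heD : e ∈ Dv H v := by rw [hDv]; simp
          have hfD : f ∈ Dv H v := by rw [hDv]; simp
          have heE : e ∈ H.E := (mem_Dv.mp heD).1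
          have hfE : f ∈ H.E := (mem_Dv.mp hfD).1
          have hve : v ∈ e := (mem_Dv.mp heD).2
          have hvf : v ∈ f := (mem_Dv.mp hfD).2
          have htpe : tp H e = tv := by
            have : tp H e ∈ Tv H v := Finset.mem_image_of_mem _ heD
            rw [hTvv] at this
            simpa using this
          have htpf : tp H f = tv := by
            have : tp H f ∈ Tv H v := Finset.mem_image_of_mem _ hfD
            rw [hTvv] at this
            simpa using this
          have hfcls : f ∈ cls H e := by
            rw [(tp_eq_iff heE hfE).mp (htpe.trans htpf.symm)]
            exact mem_cls_self hfE
          have hclse : cls H e = {e, f} := cls_pair hrank hdeg heE hfcls hef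
          -- w has an edge g of the same class
          obtain ⟨g, hgD⟩ := Finset.Nonempty.exists_mem (Finset.Nonempty.of_image
            (show (Tv H w).Nonempty from ⟨tv, by rw [hTww]; simp⟩))
          have hgE : g ∈ H.E := (mem_Dv.mp hgD).1
          have hwg : w ∈ g := (mem_Dv.mp hgD).2
          have htpg : tp H g = tv := by
            have : tp H g ∈ Tv H w := Finset.mem_image_of_mem _ hgD
            rw [hTww] at this
            simpa using this
          have hgcls : g ∈ cls H e := by
            rw [(tp_eq_iff heE hgE).mp (htpe.trans htpg.symm)]
            exact mem_cls_self hgE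
          rw [hclse] at hgcls
          have hwef : w ∈ e ∪ f := by
            rcases Finset.mem_insert.mp hgcls with rfl | hgcls
            · exact Finset.mem_union_left _ hwg
            · simp only [Finset.mem_singleton] at hgcls
              subst hgcls
              exact Finset.mem_union_right _ hwg
          have hwnS : w ∉ e ∩ f := by
            intro hwS
            have : Dv H w = {e, f} := Dv_pair hdeg heE hfE hef
              (Finset.mem_inter.mp hwS).1 (Finset.mem_inter.mp hwS).2
            rw [this] at hw2
            exact hw2 (Finset.card_pair hef)
          have hparw : parB H tv w = sig H w := by
            unfold parB
            rw [if_neg (by omega : ¬(Tv H w).card = 2), sig_fresh (fun hc => hw2 hc.1)]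
          have hOBw : parB H tv w ∈ OB H ({e, f} : Finset (Finset ι)) := by
            unfold OB
            rw [tPc_pair (by rw [htpf, htpe] : tp H f = tp H e), htpe]
            apply Finset.mem_image_of_mem
            rw [Finset.mem_sdiff, SPc_pair, sup_pair]
            exact ⟨hwef, hwnS⟩
          have hnIoo := OB_not_Ioo hrank heE hfE (pair_card hrank heE hef hfcls) hOBw
          obtain ⟨_, hlov, hhiv⟩ := alf_S hrank hdeg heE hfcls hef
            (Finset.mem_inter.mpr ⟨hve, hvf⟩)
          rw [h2, ← hparw] at hlov hhiv
          exact hnIoo ⟨hlov, hhiv⟩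
        · -- w shared, v outer: symmetric
          obtain ⟨e, f, hef, hDw⟩ := Finset.card_eq_two.mp hw2
          have heD : e ∈ Dv H w := by rw [hDw]; simp
          have hfD : f ∈ Dv H w := by rw [hDw]; simp
          have heE : e ∈ H.E := (mem_Dv.mp heD).1
          have hfE : f ∈ H.E := (mem_Dv.mp hfD).1
          have hwe : w ∈ e := (mem_Dv.mp heD).2
          have hwf : w ∈ f := (mem_Dv.mp hfD).2
          have htpe : tp H e = tv := by
            have : tp H e ∈ Tv H w := Finset.mem_image_of_mem _ heD
            rw [hTww] at this
            simpa using this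
          have htpf : tp H f = tv := by
            have : tp H f ∈ Tv H w := Finset.mem_image_of_mem _ hfD
            rw [hTww] at this
            simpa using this
          have hfcls : f ∈ cls H e := by
            rw [(tp_eq_iff heE hfE).mp (htpe.trans htpf.symm)]
            exact mem_cls_self hfE
          have hclse : cls H e = {e, f} := cls_pair hrank hdeg heE hfcls hef
          obtain ⟨g, hgD⟩ := Finset.Nonempty.exists_mem (Finset.Nonempty.of_image
            (show (Tv H v).Nonempty from ⟨tv, by rw [hTvv]; simp⟩))
          have hgE : g ∈ H.E := (mem_Dv.mp hgD).1
          have hvg : v ∈ g := (mem_Dv.mp hgD).2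
          have htpg : tp H g = tv := by
            have : tp H g ∈ Tv H v := Finset.mem_image_of_mem _ hgD
            rw [hTvv] at this
            simpa using this
          have hgcls : g ∈ cls H e := by
            rw [(tp_eq_iff heE hgE).mp (htpe.trans htpg.symm)]
            exact mem_cls_self hgE
          rw [hclse] at hgcls
          have hvef : v ∈ e ∪ f := by
            rcases Finset.mem_insert.mp hgcls with rfl | hgcls
            · exact Finset.mem_union_left _ hvg
            · simp only [Finset.mem_singleton] at hgcls
              subst hgcls
              exact Finset.mem_union_right _ hvg
          have hvnS : v ∉ e ∩ f := by
            intro hvS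
            have : Dv H v = {e, f} := Dv_pair hdeg heE hfE hef
              (Finset.mem_inter.mp hvS).1 (Finset.mem_inter.mp hvS).2
            rw [this] at hv2
            exact hv2 (Finset.card_pair hef)
          have hparv : parB H tv v = sig H v := by
            unfold parB
            rw [if_neg (by omega : ¬(Tv H v).card = 2), sig_fresh (fun hc => hv2 hc.1)]
          have hOBv : parB H tv v ∈ OB H ({e, f} : Finset (Finset ι)) := by
            unfold OB
            rw [tPc_pair (by rw [htpf, htpe] : tp H f = tp H e), htpe]
            apply Finset.mem_image_of_mem
            rw [Finset.mem_sdiff, SPc_pair, sup_pair]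
            exact ⟨hvef, hvnS⟩
          have hnIoo := OB_not_Ioo hrank heE hfE (pair_card hrank heE hef hfcls) hOBv
          obtain ⟨_, hlow, hhiw⟩ := alf_S hrank hdeg heE hfcls hef
            (Finset.mem_inter.mpr ⟨hwe, hwf⟩)
          rw [← h2, ← hparv] at hlow hhiw
          exact hnIoo ⟨hlow, hhiw⟩
        · -- both fresh
          have hsv : sig H v = mB H + 1/2 + nu H v := sig_fresh (fun hc => hv2 hc.1)
          have hsw : sig H w = mB H + 1/2 + nu H w := sig_fresh (fun hc => hw2 hc.1)
          rw [hsv, hsw] at h2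
          exact hvw (nu_inj hv hw (by linarith))
      · -- swapped: tv = sig w ∈ TS, impossible
        rw [hpw] at h1
        exact sig_not_TS w (h1 ▸ hTSv)
  · -- v on a line, w isolated
    obtain ⟨tv, htv⟩ := h0v
    have halfv := alf_eq_ptt hdeg hv htv
    rw [Finset.not_nonempty_iff_eq_empty] at h0w
    have hw0 := alf_deg0 h0w
    have h1 : (alf H v).2 ≤ ((alf H v).1)^2 := by
      rw [halfv]; exact ptt_below _ _
    rw [heq, hw0] at h1
    simp only at h1
    nlinarith [h1]
  · -- v isolated, w on a line
    obtain ⟨tw, htw⟩ := h0w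
    have halfw := alf_eq_ptt hdeg hw htw
    rw [Finset.not_nonempty_iff_eq_empty] at h0v
    have hv0 := alf_deg0 h0v
    have h1 : (alf H w).2 ≤ ((alf H w).1)^2 := by
      rw [halfw]; exact ptt_below _ _
    rw [← heq, hv0] at h1
    simp only at h1
    nlinarith [h1]
  · -- both isolated
    rw [Finset.not_nonempty_iff_eq_empty] at h0v h0w
    have hv0 := alf_deg0 h0v
    have hw0 := alf_deg0 h0w
    rw [hv0, hw0] at heq
    exact hvw (nu_inj hv hw (congrArg Prod.fst heq))
end S10
namespace S10
variable {ι : Type} [DecidableEq ι] {H : SimpleHypergraph ι}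

lemma backward (hrank : ∀ e ∈ H.E, e.card ≤ 3)
    (hdeg : ∀ v ∈ H.V, (H.E.filter (fun e => v ∈ e)).card ≤ 2)
    (hNT : ¬ ∃ a b c d : ι, [a, b, c, d].Pairwise (· ≠ ·) ∧
          ({a, b, c} : Finset ι) ∈ H.E ∧ ({b, c, d} : Finset ι) ∈ H.E ∧
          (({a, d} : Finset ι) ∈ H.E ∨
            ∃ f : ι, f ∉ ({a, b, c, d} : Finset ι) ∧ ({a, d, f} : Finset ι) ∈ H.E))
    (hNP : ¬ ∃ a b₁ b₂ c₁ c₂ d : ι, [a, b₁, b₂, c₁, c₂, d].Pairwise (· ≠ ·) ∧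
          ({a, b₁, c₁} : Finset ι) ∈ H.E ∧ ({b₁, c₁, d} : Finset ι) ∈ H.E ∧
          ({a, b₂, c₂} : Finset ι) ∈ H.E ∧ ({b₂, c₂, d} : Finset ι) ∈ H.E) :
    Nonempty (SegmentRep H) := by
  refine ⟨⟨alf H, bet H, alf_inj hrank hdeg hNT hNP, ?_, fun e _ => bet_isSegment H e,
    fun v hv e he => ⟨fun h => alf_mem_bet hdeg hv he h, fun h => by
      by_contra hne
      exact alf_not_mem_bet hrank hdeg hNT hNP hv he hne h⟩⟩⟩
  intro e he' f hf' heq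
  have he : e ∈ H.E := he'
  have hfE : f ∈ H.E := hf'
  by_contra hef
  by_cases htp : tp H e = tp H f
  · have hfcls : f ∈ cls H e := by
      rw [(tp_eq_iff he hfE).mp htp]
      exact mem_cls_self hfE
    by_cases hsub : e ⊆ f
    · have hns : ¬ f ⊆ e := fun h => hef (Finset.Subset.antisymm hsub h)
      obtain ⟨x, hxf, hxe⟩ := Finset.not_subset.mp hns
      have hxV : x ∈ H.V := H.edge_subset f hfE hxf
      have hmem : alf H x ∈ bet H f := alf_mem_bet hdeg hxV hfE hxf
      rw [← heq, mem_bet_iff] at hmem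
      rcases excl hrank hdeg hNT hNP he hfcls hef hxf hxe with h | h
      · linarith [hmem.2.1]
      · linarith [hmem.2.2]
    · obtain ⟨x, hxe, hxf⟩ := Finset.not_subset.mp hsub
      have hxV : x ∈ H.V := H.edge_subset e he hxe
      have hmem : alf H x ∈ bet H e := alf_mem_bet hdeg hxV he hxe
      rw [heq, mem_bet_iff] at hmem
      have hecls : e ∈ cls H f := mem_cls_symm he hfcls
      rcases excl hrank hdeg hNT hNP hfE hecls (Ne.symm hef) hxe hxf with h | h
      · linarith [hmem.2.1]
      · linarith [hmem.2.2]
  · have h1 : pt2 (tp H e) (loe H e) ∈ bet H e := left_mem_segment ℝ _ _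
    have h2 : pt2 (tp H e) (hie H e) ∈ bet H e := right_mem_segment ℝ _ _
    rw [heq, mem_bet_iff] at h1 h2
    have h1' := h1.1
    have h2' := h2.1
    simp only [pt2] at h1' h2'
    exact htp (line_param_inj (ne_of_lt (loe_lt_hie H e)) h1' h2')
end S10

theorem stmt10 {ι : Type} [DecidableEq ι] (H : SimpleHypergraph ι)
    (hrank : ∀ e ∈ H.E, e.card ≤ 3)
    (hdeg : ∀ v ∈ H.V, (H.E.filter (fun e => v ∈ e)).card ≤ 2) :
    Nonempty (SegmentRep H) ↔
      ((¬ ∃ a b c d : ι, [a, b, c, d].Pairwise (· ≠ ·) ∧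
          ({a, b, c} : Finset ι) ∈ H.E ∧ ({b, c, d} : Finset ι) ∈ H.E ∧
          (({a, d} : Finset ι) ∈ H.E ∨
            ∃ f : ι, f ∉ ({a, b, c, d} : Finset ι) ∧ ({a, d, f} : Finset ι) ∈ H.E)) ∧
       (¬ ∃ a b₁ b₂ c₁ c₂ d : ι, [a, b₁, b₂, c₁, c₂, d].Pairwise (· ≠ ·) ∧
          ({a, b₁, c₁} : Finset ι) ∈ H.E ∧ ({b₁, c₁, d} : Finset ι) ∈ H.E ∧
          ({a, b₂, c₂} : Finset ι) ∈ H.E ∧ ({b₂, c₂, d} : Finset ι) ∈ H.E)) := by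
  constructor
  · rintro ⟨R⟩
    exact ⟨S10.forward_tri hdeg R, S10.forward_path R⟩
  · rintro ⟨hNT, hNP⟩
    exact S10.backward hrank hdeg hNT hNP
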